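/- arXiv:1812.02742 — 7 statements merged into one kernel-verified Lean document; each statement's English description precedes it below -/
import Mathlib

section
/- For all integers n ≥ 2, the signed bivariate excedance polynomial over S_n satisfies ∑_{π ∈ S_n} (-1)^{inv(π)} t^{exc(π)} s^{nexc(π)-1} = (s - t)^{n-1}. -/
open Finset MvPolynomial

/-- Number of excedances of a permutation of `{0,…,n-1}`. -/
def excA {n : ℕ} (π : Equiv.Perm (Fin n)) : ℕ :=
  (Finset.univ.filter (fun i => i < π i)).card

/-- Number of non-excedances. -/
def nexcA {n : ℕ} (π : Equiv.Perm (Fin n)) : ℕ := n - excA π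

/-- Number of inversions. -/
def invA {n : ℕ} (π : Equiv.Perm (Fin n)) : ℕ :=
  (Finset.univ.filter (fun p : Fin n × Fin n => p.1 < p.2 ∧ π p.2 < π p.1)).card



lemma sign_eq_inv {n : ℕ} (π : Equiv.Perm (Fin n)) :
    ((Equiv.Perm.sign π : ℤ) : ℚ) = (-1 : ℚ) ^ invA π := by
  classical
  set v : Fin n → ℚ := fun i => (i : ℚ) with hv
  have hvand : ((Matrix.vandermonde v).submatrix π id).det
      = (Equiv.Perm.sign π : ℤ) * (Matrix.vandermonde v).det :=
    Matrix.det_permute π _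
  have hsub : (Matrix.vandermonde v).submatrix π id = Matrix.vandermonde (v ∘ π) := by
    ext i j; simp [Matrix.vandermonde, Matrix.submatrix]
  set s : Finset (Fin n × Fin n) := Finset.univ.filter (fun p => p.1 < p.2) with hs
  have hprod : ∀ w : Fin n → ℚ,
      (Matrix.vandermonde w).det = ∏ p ∈ s, (w p.2 - w p.1) := by
    intro w
    rw [Matrix.det_vandermonde, Finset.prod_sigma']
    apply Finset.prod_nbij' (fun p => (p.1, p.2)) (fun p => ⟨p.1, p.2⟩) <;>
      simp [hs, Finset.mem_sigma]
  -- sorted map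
  have hmemF : ∀ p ∈ s, (if π p.1 < π p.2 then (π p.1, π p.2) else (π p.2, π p.1)) ∈ s := by
    intro p hp
    simp only [hs, Finset.mem_filter, Finset.mem_univ, true_and] at hp ⊢
    split_ifs with h
    · exact h
    · rcases lt_or_eq_of_le (not_lt.mp h) with h' | h'
      · exact h'
      · exact absurd (π.injective h').symm (ne_of_lt hp)
  have key : ∏ p ∈ s, (v (π p.2) - v (π p.1))
      = (-1 : ℚ) ^ invA π * ∏ p ∈ s, (v p.2 - v p.1) := by
    have step1 : ∀ p ∈ s, (v (π p.2) - v (π p.1))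
        = (if π p.2 < π p.1 then (-1 : ℚ) else 1)
          * (fun q : Fin n × Fin n => v q.2 - v q.1)
            (if π p.1 < π p.2 then (π p.1, π p.2) else (π p.2, π p.1)) := by
      intro p hp
      simp only [hs, Finset.mem_filter, Finset.mem_univ, true_and] at hp
      have hne : π p.1 ≠ π p.2 := fun h => (ne_of_lt hp) (π.injective h)
      rcases hne.lt_or_gt with h | h
      · rw [if_neg (asymm h), if_pos h]; ring
      · rw [if_pos h, if_neg (asymm h)]; ring
    rw [Finset.prod_congr rfl step1, Finset.prod_mul_distrib]
    congr 1
    · rw [Finset.prod_ite, Finset.prod_const, Finset.prod_const, one_pow, mul_one]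
      congr 1
      rw [invA, hs, Finset.filter_filter]
    · refine Finset.prod_nbij'
        (fun p => if π p.1 < π p.2 then (π p.1, π p.2) else (π p.2, π p.1))
        (fun q => if π.symm q.1 < π.symm q.2 then (π.symm q.1, π.symm q.2)
          else (π.symm q.2, π.symm q.1)) hmemF ?_ ?_ ?_ ?_
      · intro q hq
        simp only [hs, Finset.mem_filter, Finset.mem_univ, true_and] at hq ⊢
        have hne : π.symm q.1 ≠ π.symm q.2 := fun h => (ne_of_lt hq) (π.symm.injective h)
        rcases hne.lt_or_gt with h | h
        · rwa [if_pos h]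
        · rwa [if_neg (asymm h)]
      · intro p hp
        simp only [hs, Finset.mem_filter, Finset.mem_univ, true_and] at hp
        have hne : π p.1 ≠ π p.2 := fun h => (ne_of_lt hp) (π.injective h)
        rcases hne.lt_or_gt with h | h
        · simp [if_pos h, Equiv.symm_apply_apply, if_pos hp]
        · simp [if_neg (asymm h), Equiv.symm_apply_apply, if_neg (asymm hp)]
      · intro q hq
        simp only [hs, Finset.mem_filter, Finset.mem_univ, true_and] at hq
        have hne : π.symm q.1 ≠ π.symm q.2 := fun h => (ne_of_lt hq) (π.symm.injective h)
        rcases hne.lt_or_gt with h | h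
        · simp [if_pos h, Equiv.apply_symm_apply, if_pos hq]
        · simp [if_neg (asymm h), Equiv.apply_symm_apply, if_neg (asymm hq)]
      · intro p hp; rfl
  have hD : (∏ p ∈ s, (v p.2 - v p.1)) ≠ 0 := by
    apply Finset.prod_ne_zero_iff.mpr
    intro p hp
    simp only [hs, Finset.mem_filter, Finset.mem_univ, true_and] at hp
    have : v p.1 < v p.2 := by
      simp only [hv]
      exact_mod_cast Fin.lt_iff_val_lt_val.mp hp
    linarith
  have := hvand
  rw [hsub, hprod, hprod] at this
  have hcomp : ∏ p ∈ s, ((v ∘ π) p.2 - (v ∘ π) p.1) = ∏ p ∈ s, (v (π p.2) - v (π p.1)) := rfl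
  rw [hcomp, key] at this
  exact mul_right_cancel₀ hD this.symm


noncomputable def MM (m : ℕ) : Matrix (Fin (m+1)) (Fin (m+1)) (MvPolynomial (Fin 2) ℚ) :=
  fun a b => if b < a then X 1 else X 0

noncomputable def EE (m : ℕ) : Matrix (Fin (m+1)) (Fin (m+1)) (MvPolynomial (Fin 2) ℚ) :=
  fun k j => if k = j then 1 else if (k : ℕ) = (j : ℕ) + 1 then -1 else 0

noncomputable def NN (m : ℕ) : Matrix (Fin (m+1)) (Fin (m+1)) (MvPolynomial (Fin 2) ℚ) :=
  fun a j => if j = Fin.last m then X 0 else if (a : ℕ) = (j : ℕ) + 1 then X 1 - X 0 else 0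

lemma det_EE (m : ℕ) : (EE m).det = 1 := by
  rw [Matrix.det_of_lowerTriangular]
  · simp [EE]
  · intro i j hij
    simp only [EE]
    have h : (i:ℕ) < (j:ℕ) := hij
    rw [if_neg (by omega : ¬ (i:ℕ) = (j:ℕ)+1)]
    rw [if_neg (fun hh => by subst hh; omega)]

lemma MM_mul_EE (m : ℕ) : MM m * EE m = NN m := by
  funext a j
  rw [Matrix.mul_apply]
  have hsplit : ∀ k, MM m a k * EE m k j
      = (if k = j then MM m a j else 0) +
        (if (k:ℕ) = (j:ℕ)+1 then -(MM m a k) else 0) := by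
    intro k
    by_cases h1 : k = j
    · subst h1
      have h2 : ¬ ((k:ℕ) = (k:ℕ)+1) := by omega
      simp [EE, h2]
    · by_cases h2 : (k:ℕ) = (j:ℕ)+1
      · simp only [EE, if_neg h1, if_pos h2]; ring
      · simp [EE, h1, h2]
  rw [Finset.sum_congr rfl (fun k _ => hsplit k), Finset.sum_add_distrib]
  rw [Finset.sum_ite_eq' Finset.univ j, if_pos (Finset.mem_univ j)]
  by_cases hj : j = Fin.last m
  · have hzero : ∀ k : Fin (m+1), (if (k:ℕ) = (j:ℕ)+1 then -(MM m a k) else 0) = 0 := by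
      intro k
      rw [if_neg]
      intro h
      have := k.isLt
      rw [hj, Fin.val_last] at h
      omega
    rw [Finset.sum_congr rfl (fun k _ => hzero k), Finset.sum_const, smul_zero, add_zero]
    have : ¬ (j < a) := by subst hj; exact not_lt.mpr (Fin.le_last a)
    simp [MM, NN, hj, this]
    exact Fin.le_last a
  · have hjlt : (j:ℕ) + 1 < m + 1 := by
      have := Fin.val_lt_last hj
      omega
    set k0 : Fin (m+1) := ⟨(j:ℕ)+1, hjlt⟩ with hk0
    have hcond : ∀ k : Fin (m+1), ((k:ℕ) = (j:ℕ)+1) ↔ k = k0 := by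
      intro k; constructor
      · intro h; exact Fin.ext h
      · intro h; subst h; rfl
    have : ∀ k : Fin (m+1), (if (k:ℕ) = (j:ℕ)+1 then -(MM m a k) else 0)
        = (if k = k0 then -(MM m a k0) else 0) := by
      intro k
      by_cases h : k = k0
      · subst h; simp [hcond]
      · rw [if_neg (fun hh => h (Fin.ext hh)), if_neg h]
    rw [Finset.sum_congr rfl (fun k _ => this k), Finset.sum_ite_eq' Finset.univ k0,
      if_pos (Finset.mem_univ k0)]
    -- now : MM m a j + -(MM m a k0) = NN m a j
    simp only [MM, NN, if_neg hj]
    have hk0v : (k0 : ℕ) = (j:ℕ)+1 := rfl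
    by_cases hcase : (a : ℕ) = (j:ℕ)+1
    · have h1 : j < a := by rw [Fin.lt_iff_val_lt_val]; omega
      have h2 : ¬ (k0 < a) := by rw [Fin.lt_iff_val_lt_val]; omega
      rw [if_pos h1, if_neg h2, if_pos hcase]; ring
    · rw [if_neg hcase]
      by_cases h1 : j < a
      · have h2 : k0 < a := by
          rw [Fin.lt_iff_val_lt_val] at h1 ⊢
          omega
        rw [if_pos h1, if_pos h2]; ring
      · have h2 : ¬ (k0 < a) := by
          rw [Fin.lt_iff_val_lt_val] at h1 ⊢
          omega
        rw [if_neg h1, if_neg h2]; ring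

lemma det_NN (m : ℕ) : (NN m).det = X 0 * (X 0 - X 1 : MvPolynomial (Fin 2) ℚ) ^ m := by
  rw [Matrix.det_apply']
  rw [Finset.sum_eq_single_of_mem (finRotate (m+1)) (Finset.mem_univ _)]
  · rw [sign_finRotate]
    have hprod : ∏ i : Fin (m+1), NN m (finRotate (m+1) i) i
        = (X 1 - X 0 : MvPolynomial (Fin 2) ℚ) ^ m * X 0 := by
      rw [← Finset.prod_compl_mul_prod ({Fin.last m} : Finset (Fin (m+1)))]
      have h1 : ∏ i ∈ ({Fin.last m} : Finset (Fin (m+1)))ᶜ, NN m (finRotate (m+1) i) i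
          = (X 1 - X 0 : MvPolynomial (Fin 2) ℚ) ^ m := by
        rw [Finset.prod_congr rfl (g := fun _ => (X 1 - X 0 : MvPolynomial (Fin 2) ℚ)), Finset.prod_const]
        · congr 1
          rw [Finset.card_compl, Finset.card_singleton, Fintype.card_fin]
          omega
        · intro i hi
          rw [Finset.mem_compl, Finset.mem_singleton] at hi
          have hlt : i < Fin.last m := lt_of_le_of_ne (Fin.le_last i) hi
          have hval : ((finRotate (m+1) i : Fin (m+1)) : ℕ) = (i:ℕ) + 1 := by
            rw [finRotate_succ_apply]
            exact Fin.val_add_one_of_lt hlt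
          simp only [NN]
          rw [if_neg hi, if_pos hval]
      rw [h1]
      simp [NN, finRotate_last]
    rw [hprod]
    have hsign : ((((-1:ℤˣ)^m : ℤˣ) : ℤ) : MvPolynomial (Fin 2) ℚ) = (-1)^m := by
      push_cast; ring
    rw [Nat.add_sub_cancel, hsign]
    rw [show (X 0 - X 1 : MvPolynomial (Fin 2) ℚ) = (-1) * (X 1 - X 0) from by ring, mul_pow]
    ring
  · intro σ _ hσ
    have hex : ∃ i : Fin (m+1), i ≠ Fin.last m ∧ (σ i : ℕ) ≠ (i : ℕ) + 1 := by
      by_contra hcon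
      push_neg at hcon
      apply hσ
      have hagree : ∀ i : Fin (m+1), i ≠ Fin.last m → σ i = finRotate (m+1) i := by
        intro i hi
        have hlt : i < Fin.last m := lt_of_le_of_ne (Fin.le_last i) hi
        have hval : ((finRotate (m+1) i : Fin (m+1)) : ℕ) = (i:ℕ) + 1 := by
          rw [finRotate_succ_apply]
          exact Fin.val_add_one_of_lt hlt
        exact Fin.ext ((hcon i hi).trans hval.symm)
      have hlast : σ (Fin.last m) = finRotate (m+1) (Fin.last m) := by
        by_contra hne
        set j := (finRotate (m+1)).symm (σ (Fin.last m)) with hjdef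
        have hj : finRotate (m+1) j = σ (Fin.last m) := Equiv.apply_symm_apply _ _
        have hjne : j ≠ Fin.last m := by
          intro h
          apply hne
          rw [← hj, h]
        have : σ j = σ (Fin.last m) := by rw [hagree j hjne, hj]
        exact hjne (σ.injective this)
      ext i
      rcases eq_or_ne i (Fin.last m) with rfl | hi
      · exact congrArg Fin.val hlast
      · exact congrArg Fin.val (hagree i hi)
    obtain ⟨i, hi1, hi2⟩ := hex
    have : NN m (σ i) i = 0 := by simp [NN, hi1, hi2]
    have hz : (∏ k : Fin (m+1), NN m (σ k) k) = 0 :=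
      Finset.prod_eq_zero (Finset.mem_univ i) this
    rw [hz, mul_zero]

lemma det_MM (m : ℕ) : (MM m).det = X 0 * (X 0 - X 1 : MvPolynomial (Fin 2) ℚ) ^ m := by
  have := congrArg Matrix.det (MM_mul_EE m)
  rwa [Matrix.det_mul, det_EE, mul_one, det_NN] at this

theorem stmt1 (n : ℕ) (hn : 2 ≤ n) :
    (∑ π : Equiv.Perm (Fin n),
      (MvPolynomial.C ((-1 : ℚ) ^ invA π)) *
        (MvPolynomial.X 1 : MvPolynomial (Fin 2) ℚ) ^ excA π *
        (MvPolynomial.X 0) ^ (nexcA π - 1))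
    = (MvPolynomial.X 0 - MvPolynomial.X 1 : MvPolynomial (Fin 2) ℚ) ^ (n - 1) := by
  obtain ⟨m, rfl⟩ : ∃ m, n = m + 1 := ⟨n - 1, by omega⟩
  simp only [Nat.add_sub_cancel]
  have hexc : ∀ π : Equiv.Perm (Fin (m+1)), excA π ≤ m := by
    intro π
    have hsub : Finset.univ.filter (fun i => i < π i) ⊆ ({Fin.last m} : Finset (Fin (m+1)))ᶜ := by
      intro i hi
      rw [Finset.mem_filter] at hi
      rw [Finset.mem_compl, Finset.mem_singleton]
      intro h
      subst h
      exact absurd hi.2 (not_lt.mpr (Fin.le_last _))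
    have := Finset.card_le_card hsub
    rw [Finset.card_compl, Finset.card_singleton, Fintype.card_fin] at this
    calc excA π ≤ m + 1 - 1 := this
    _ = m := by omega
  have hnexc : ∀ π : Equiv.Perm (Fin (m+1)), 1 ≤ nexcA π := by
    intro π
    have := hexc π
    unfold nexcA
    omega
  have hsigncast : ∀ σ : Equiv.Perm (Fin (m+1)),
      (((Equiv.Perm.sign σ : ℤˣ) : ℤ) : MvPolynomial (Fin 2) ℚ)
        = MvPolynomial.C ((-1 : ℚ) ^ invA σ) := by
    intro σ
    rw [← sign_eq_inv σ, map_intCast]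
  have main : (X 0 : MvPolynomial (Fin 2) ℚ) *
      (∑ π : Equiv.Perm (Fin (m+1)),
        (MvPolynomial.C ((-1 : ℚ) ^ invA π)) * (X 1 : MvPolynomial (Fin 2) ℚ) ^ excA π
          * (X 0) ^ (nexcA π - 1))
      = X 0 * (X 0 - X 1 : MvPolynomial (Fin 2) ℚ) ^ m := by
    rw [← det_MM m, Matrix.det_apply', Finset.mul_sum]
    apply Finset.sum_congr rfl
    intro σ _
    have hprod : ∏ i : Fin (m+1), MM m (σ i) i = (X 1 : MvPolynomial (Fin 2) ℚ) ^ excA σ * X 0 ^ nexcA σ := by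
      have heq : ∀ i : Fin (m+1), MM m (σ i) i
          = if i < σ i then (X 1 : MvPolynomial (Fin 2) ℚ) else X 0 := fun i => rfl
      rw [Finset.prod_congr rfl (fun i _ => heq i), Finset.prod_ite,
        Finset.prod_const, Finset.prod_const]
      congr 1
      congr 1
      have h := Finset.card_filter_add_card_filter_not
        (s := (Finset.univ : Finset (Fin (m+1)))) (p := fun i => i < σ i)
      rw [Finset.card_univ, Fintype.card_fin] at h
      have hex : (Finset.univ.filter (fun i => i < σ i)).card = excA σ := rfl
      rw [hex] at h
      unfold nexcA
      omega
    have hp : (X 0 : MvPolynomial (Fin 2) ℚ) ^ nexcA σ = X 0 ^ (nexcA σ - 1) * X 0 := by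
      rw [← pow_succ]
      congr 1
      have := hnexc σ
      omega
    rw [hprod, hsigncast σ, hp]
    ring
  exact mul_left_cancel₀ (MvPolynomial.X_ne_zero 0) main
end

section
/- For all integers n ≥ 2, the signed univariate excedance polynomial over S_n satisfies ∑_{π ∈ S_n} (-1)^{inv(π)} t^{exc(π)} = (1 - t)^{n-1}. -/
open Finset Polynomial

lemma signAux_eq_sign {n : ℕ} (π : Equiv.Perm (Fin n)) :
    Equiv.Perm.signAux π = Equiv.Perm.sign π := by
  refine Equiv.Perm.swap_induction_on π ?_ ?_
  · simp [Equiv.Perm.signAux_one]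
  · intro f x y hxy ih
    rw [Equiv.Perm.signAux_mul, map_mul, ih, Equiv.Perm.signAux_swap hxy,
      Equiv.Perm.sign_swap hxy]

lemma sign_eq_pow_invA {n : ℕ} (π : Equiv.Perm (Fin n)) :
    Equiv.Perm.sign π = (-1 : ℤˣ) ^ invA π := by
  rw [← signAux_eq_sign]
  unfold Equiv.Perm.signAux
  rw [← Finset.prod_filter, Finset.prod_const]
  congr 1
  apply Finset.card_nbij' (fun x => (x.2, x.1)) (fun p => ⟨p.2, p.1⟩)
  · intro x hx
    simp only [Finset.mem_coe, Finset.mem_filter, Equiv.Perm.mem_finPairsLT] at hx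
    simp only [Finset.mem_coe, Finset.mem_filter, Finset.mem_univ, true_and]
    refine ⟨hx.1, lt_of_le_of_ne hx.2 ?_⟩
    exact fun h => absurd (π.injective h) (ne_of_gt hx.1)
  · intro p hp
    simp only [Finset.mem_coe, Finset.mem_filter, Finset.mem_univ, true_and] at hp
    simp only [Finset.mem_coe, Finset.mem_filter, Equiv.Perm.mem_finPairsLT]
    exact ⟨hp.1, le_of_lt hp.2⟩
  · intro x _; rfl
  · intro p _; rfl

theorem stmt2 (n : ℕ) (hn : 2 ≤ n) :
    (∑ π : Equiv.Perm (Fin n),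
      Polynomial.C ((-1 : ℚ) ^ invA π) * (Polynomial.X : Polynomial ℚ) ^ excA π)
    = (1 - Polynomial.X : Polynomial ℚ) ^ (n - 1) := by
  obtain ⟨m, rfl⟩ : ∃ m, n = m + 1 := ⟨n - 1, by omega⟩
  -- the matrix whose determinant is the LHS
  set M : Matrix (Fin (m + 1)) (Fin (m + 1)) (Polynomial ℚ) :=
    fun i j => if j < i then Polynomial.X else 1 with hM
  -- row operation matrix
  set A : Matrix (Fin (m + 1)) (Fin (m + 1)) (Polynomial ℚ) :=
    fun i k => (if k = i then 1 else 0) - (if (k : ℕ) = (i : ℕ) + 1 then 1 else 0) with hA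
  -- the reduced (lower triangular) matrix
  set T : Matrix (Fin (m + 1)) (Fin (m + 1)) (Polynomial ℚ) :=
    fun i j => if (i : ℕ) + 1 = m + 1 then M i j
      else (if j = i then 1 - Polynomial.X else 0) with hT
  have hAM : A * M = T := by
    ext i j
    rw [Matrix.mul_apply]
    have expand : ∀ k : Fin (m + 1), A i k * M k j =
        (if k = i then M i j else 0) - (if (k : ℕ) = (i : ℕ) + 1 then M k j else 0) := by
      intro k
      rw [hA]
      dsimp only
      rw [sub_mul]
      congr 1
      · split_ifs with h
        · subst h; rw [one_mul]
        · rw [zero_mul]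
      · split_ifs with h
        · rw [one_mul]
        · rw [zero_mul]
    rw [Finset.sum_congr rfl (fun k _ => expand k), Finset.sum_sub_distrib,
      Finset.sum_ite_eq' Finset.univ i (fun _ => M i j)]
    simp only [Finset.mem_univ, if_true]
    by_cases h : (i : ℕ) + 1 < m + 1
    · have hcond : ∀ k : Fin (m + 1),
          ((k : ℕ) = (i : ℕ) + 1) = (k = (⟨(i : ℕ) + 1, h⟩ : Fin (m + 1))) := by
        intro k; rw [Fin.ext_iff]
      simp only [hcond]
      rw [Finset.sum_ite_eq' Finset.univ (⟨(i : ℕ) + 1, h⟩ : Fin (m + 1)) (fun k => M k j)]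
      simp only [Finset.mem_univ, if_true]
      rw [hT]
      dsimp only
      rw [if_neg (by omega)]
      rw [hM]
      dsimp only
      rcases lt_trichotomy j i with hj | hj | hj
      · rw [if_pos hj, if_pos (show j < ⟨(i : ℕ) + 1, h⟩ from by
          simp only [Fin.lt_def]; omega), if_neg (ne_of_lt hj), sub_self]
      · subst hj
        rw [if_neg (lt_irrefl _), if_pos (show j < ⟨(j : ℕ) + 1, h⟩ from by
          simp only [Fin.lt_def]; omega), if_pos rfl]
      · rw [if_neg (not_lt_of_gt hj), if_neg (show ¬ j < ⟨(i : ℕ) + 1, h⟩ from by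
          simp only [Fin.lt_def, not_lt]; omega), if_neg (ne_of_gt hj), sub_self]
    · have h' : (i : ℕ) + 1 = m + 1 := by omega
      rw [Finset.sum_eq_zero (fun k _ => by
        rw [if_neg (show ¬ (k : ℕ) = (i : ℕ) + 1 from by have := k.isLt; omega)]),
        sub_zero, hT]
      dsimp only
      rw [if_pos h']
  have hdetA : A.det = 1 := by
    have ht : A.BlockTriangular id := by
      intro i j hij
      simp only [id] at hij
      rw [hA]
      dsimp only
      rw [if_neg (ne_of_lt hij), if_neg (by have : (j : ℕ) < (i : ℕ) := hij; omega), sub_zero]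
    rw [Matrix.det_of_upperTriangular ht]
    apply Finset.prod_eq_one
    intro i _
    rw [hA]
    dsimp only
    rw [if_pos rfl, if_neg (by omega), sub_zero]
  have hdetT : T.det = (1 - Polynomial.X : Polynomial ℚ) ^ m := by
    have ht : T.BlockTriangular OrderDual.toDual := by
      intro i j hij
      have hij' : i < j := hij
      rw [hT]
      dsimp only
      rw [if_neg (by have := j.isLt; have : (i : ℕ) < (j : ℕ) := hij'; omega),
        if_neg (ne_of_gt hij')]
    rw [Matrix.det_of_lowerTriangular T ht]
    have hdiag : ∀ i : Fin (m + 1),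
        T i i = if (i : ℕ) + 1 = m + 1 then 1 else 1 - Polynomial.X := by
      intro i
      rw [hT]; dsimp only
      by_cases h1 : (i : ℕ) + 1 = m + 1
      · rw [if_pos h1, if_pos h1, hM]; dsimp only; rw [if_neg (lt_irrefl _)]
      · rw [if_neg h1, if_neg h1, if_pos rfl]
    rw [Finset.prod_congr rfl (fun i _ => hdiag i), Finset.prod_ite, Finset.prod_const,
      Finset.prod_const, one_pow, one_mul]
    congr 1
    have hfe : (Finset.univ.filter (fun i : Fin (m + 1) => ¬ (i : ℕ) + 1 = m + 1)) =
        Finset.univ.erase (Fin.last m) := by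
      ext i
      simp only [Finset.mem_filter, Finset.mem_univ, true_and, Finset.mem_erase, and_true]
      rw [Ne, Fin.ext_iff, Fin.val_last]
      omega
    rw [hfe, Finset.card_erase_of_mem (Finset.mem_univ _), Finset.card_univ, Fintype.card_fin]
    omega
  have hdetM : M.det = (1 - Polynomial.X : Polynomial ℚ) ^ m := by
    have hd := congrArg Matrix.det hAM
    rw [Matrix.det_mul, hdetA, one_mul] at hd
    rw [hd, hdetT]
  have hm1 : m + 1 - 1 = m := rfl
  rw [hm1, ← hdetM, Matrix.det_apply']
  apply Finset.sum_congr rfl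
  intro σ _
  have hprod : ∏ i, M (σ i) i = Polynomial.X ^ excA σ := by
    have hent : ∀ i : Fin (m + 1), M (σ i) i = if i < σ i then Polynomial.X else 1 := by
      intro i; rw [hM]
    rw [Finset.prod_congr rfl (fun i _ => hent i), ← Finset.prod_filter, Finset.prod_const]
    rfl
  rw [hprod]
  congr 1
  rw [show Equiv.Perm.sign σ = ((-1 : ℤˣ) ^ invA σ) from sign_eq_pow_invA σ]
  push_cast
  rw [map_pow, map_neg, map_one]
end

section
/- For all integers n ≥ 2 and 1 ≤ r ≤ n-2, the number of even permutations π ∈ S_n with π⁻¹(n) = r and exc(π) = k equals the number of odd permutations π ∈ S_n with π⁻¹(n) = r and exc(π) = k; each equals half the number of all permutations in S_n with π⁻¹(n) = r and exc(π) = k. -/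
open Finset

/-- One-line notation of `π` extended to `ℕ`. -/
def onel {n : ℕ} (π : Equiv.Perm (Fin n)) (i : ℕ) : ℕ :=
  if h : i < n then (π ⟨i, h⟩ : Fin n) else 0

/-- `π` has the largest letter `n` (encoded as `n-1`) at (1-based) position `r`,
and exactly `k` excedances. -/
def posExc (n r k : ℕ) (π : Equiv.Perm (Fin n)) : Prop :=
  onel π (r - 1) = n - 1 ∧ excA π = k

instance (n r k : ℕ) : DecidablePred (posExc n r k) := by
  unfold posExc; infer_instance

lemma signAux_eq_invA {n : ℕ} (π : Equiv.Perm (Fin n)) :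
    Equiv.Perm.signAux π = (-1 : ℤˣ) ^ invA π := by
  unfold Equiv.Perm.signAux invA
  rw [← Finset.prod_filter_mul_prod_filter_not (Equiv.Perm.finPairsLT n)
      (fun x => π x.1 ≤ π x.2)]
  rw [Finset.prod_congr rfl (fun x hx => if_pos (Finset.mem_filter.1 hx).2),
      Finset.prod_congr rfl (fun x hx => if_neg (Finset.mem_filter.1 hx).2),
      Finset.prod_const, Finset.prod_const, one_pow, mul_one]
  congr 1
  apply Finset.card_bij (fun x _ => (x.2, x.1))
  · intro x hx
    simp only [Finset.mem_filter, Equiv.Perm.mem_finPairsLT] at hx ⊢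
    exact ⟨Finset.mem_univ _, hx.1, lt_of_le_of_ne hx.2 (π.injective.ne (ne_of_gt hx.1))⟩
  · intro x hx y hy h
    simp only [Prod.mk.injEq] at h
    exact Sigma.ext h.2 (heq_of_eq h.1)
  · intro p hp
    simp only [Finset.mem_filter, Finset.mem_univ, true_and] at hp
    exact ⟨⟨p.2, p.1⟩, Finset.mem_filter.2 ⟨Equiv.Perm.mem_finPairsLT.2 hp.1, le_of_lt hp.2⟩, rfl⟩

lemma even_invA_iff {n : ℕ} (π : Equiv.Perm (Fin n)) :
    Even (invA π) ↔ Equiv.Perm.signAux π = 1 := by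
  rw [signAux_eq_invA]
  exact (neg_one_pow_eq_one_iff_even (by decide)).symm

lemma parity_flip {n : ℕ} (π : Equiv.Perm (Fin n)) {a b : Fin n} (hab : a ≠ b) :
    Even (invA (π * Equiv.swap a b)) ↔ ¬ Even (invA π) := by
  rw [even_invA_iff, even_invA_iff, Equiv.Perm.signAux_mul,
      Equiv.Perm.signAux_swap hab]
  rcases Int.units_eq_one_or (Equiv.Perm.signAux π) with h | h <;> simp [h]

theorem stmt3 (n r k : ℕ) (hn : 2 ≤ n) (hr1 : 1 ≤ r) (hr2 : r ≤ n - 2) :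
    (Finset.univ.filter
        (fun π : Equiv.Perm (Fin n) => posExc n r k π ∧ Even (invA π))).card =
      (Finset.univ.filter
        (fun π : Equiv.Perm (Fin n) => posExc n r k π ∧ ¬ Even (invA π))).card ∧
    2 * (Finset.univ.filter
        (fun π : Equiv.Perm (Fin n) => posExc n r k π ∧ Even (invA π))).card =
      (Finset.univ.filter (fun π : Equiv.Perm (Fin n) => posExc n r k π)).card := by
  have hn3 : 3 ≤ n := by omega
  have ha : n - 2 < n := by omega
  have hb : n - 1 < n := by omega
  have hrn : r - 1 < n := by omega
  set a : Fin n := ⟨n - 2, ha⟩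
  set b : Fin n := ⟨n - 1, hb⟩
  set p : Fin n := ⟨r - 1, hrn⟩
  have hab : a ≠ b := by simp [a, b, Fin.ext_iff]; omega
  have hpa : p ≠ a := by simp [p, a, Fin.ext_iff]; omega
  have hpb : p ≠ b := by simp [p, b, Fin.ext_iff]; omega
  set σ : Equiv.Perm (Fin n) := Equiv.swap a b
  -- key: posExc is preserved by right multiplication by σ
  have key : ∀ π : Equiv.Perm (Fin n), posExc n r k π → posExc n r k (π * σ) := by
    intro π hπ
    obtain ⟨h1, h2⟩ := hπ
    rw [onel, dif_pos hrn] at h1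
    have hπp : π p = b := by
      apply Fin.ext; simpa [b] using h1
    have hπa : π a ≠ b := fun h => hpa (π.injective (hπp.trans h.symm))
    have hπb : π b ≠ b := fun h => hpb (π.injective (hπp.trans h.symm))
    have hav : (a : ℕ) = n - 2 := rfl
    have hbv : (b : ℕ) = n - 1 := rfl
    have hπab : ∀ x : Fin n, π x ≠ b → (π x : ℕ) < n - 1 := by
      intro x hx
      have := (π x).isLt
      have : (π x : ℕ) ≠ n - 1 := fun h => hx (Fin.ext h)
      omega
    constructor
    · rw [onel, dif_pos hrn]
      have : σ p = p := Equiv.swap_apply_of_ne_of_ne hpa hpb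
      simp only [Equiv.Perm.mul_apply]
      rw [show (⟨r - 1, hrn⟩ : Fin n) = p from rfl, this, hπp]
    · rw [← h2]
      unfold excA
      congr 1
      apply Finset.filter_congr
      intro i _
      simp only [Equiv.Perm.mul_apply]
      have hva := hπab a hπa
      have hvb := hπab b hπb
      by_cases hia : i = a
      · subst hia
        have h1 : σ a = b := Equiv.swap_apply_left a b
        rw [h1]
        refine iff_of_false (fun h => ?_) (fun h => ?_) <;>
          rw [Fin.lt_iff_val_lt_val] at h <;> omega
      · by_cases hib : i = b
        · subst hib
          have h1 : σ b = a := Equiv.swap_apply_right a b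
          rw [h1]
          refine iff_of_false (fun h => ?_) (fun h => ?_) <;>
            rw [Fin.lt_iff_val_lt_val] at h <;> omega
        · rw [Equiv.swap_apply_of_ne_of_ne hia hib]
  have hinv : ∀ π : Equiv.Perm (Fin n), π * σ * σ = π := by
    intro π
    rw [mul_assoc]
    simp [σ, Equiv.swap_mul_self]
  have hcard : (Finset.univ.filter
        (fun π : Equiv.Perm (Fin n) => posExc n r k π ∧ Even (invA π))).card =
      (Finset.univ.filter
        (fun π : Equiv.Perm (Fin n) => posExc n r k π ∧ ¬ Even (invA π))).card := by
    apply Finset.card_bij' (fun π _ => π * σ) (fun π _ => π * σ)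
    · intro π hπ
      simp only [Finset.mem_filter, Finset.mem_univ, true_and] at hπ ⊢
      refine ⟨key π hπ.1, ?_⟩
      rw [parity_flip π hab]
      exact fun h => h hπ.2
    · intro π hπ
      simp only [Finset.mem_filter, Finset.mem_univ, true_and] at hπ ⊢
      exact ⟨key π hπ.1, (parity_flip π hab).mpr hπ.2⟩
    · intro π _; exact hinv π
    · intro π _; exact hinv π
  refine ⟨hcard, ?_⟩
  have hsplit := Finset.card_filter_add_card_filter_not
    (s := Finset.univ.filter (fun π : Equiv.Perm (Fin n) => posExc n r k π))
    (p := fun π => Even (invA π))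
  simp only [Finset.filter_filter] at hsplit
  omega
end

section
/- For all even integers n ≥ 4, each of AExc_n^+(t) = ∑_{π even in S_n} t^{exc(π)} and AExc_n^-(t) = ∑_{π odd in S_n} t^{exc(π)} can be written as a sum of two gamma positive polynomials whose centers of symmetry differ by one. -/
open Finset Polynomial

/-- `AExc_n^+(t)`, the excedance polynomial over even permutations. -/
noncomputable def AexcPt (n : ℕ) : Polynomial ℚ :=
  ∑ π ∈ Finset.univ.filter (fun π : Equiv.Perm (Fin n) => Even (invA π)),
    (Polynomial.X : Polynomial ℚ) ^ excA π

/-- `AExc_n^-(t)`, the excedance polynomial over odd permutations. -/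
noncomputable def AexcMt (n : ℕ) : Polynomial ℚ :=
  ∑ π ∈ Finset.univ.filter (fun π : Equiv.Perm (Fin n) => ¬ Even (invA π)),
    (Polynomial.X : Polynomial ℚ) ^ excA π

/-- `f` is gamma positive with parameters `r ≤ N`: it has an expansion
`f = ∑ γ_i t^{r+i}(1+t)^{N-r-2i}` with `γ_i ≥ 0`; its center of symmetry is `(N+r)/2`. -/
def IsGammaPos (f : Polynomial ℚ) (r N : ℕ) : Prop :=
  r ≤ N ∧ ∃ γ : ℕ → ℚ, (∀ i, 0 ≤ γ i) ∧
    f = ∑ i ∈ Finset.range ((N - r) / 2 + 1),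
      Polynomial.C (γ i) * Polynomial.X ^ (r + i) * (1 + Polynomial.X) ^ (N - r - 2 * i)

/-- `f` is a sum of two gamma positive polynomials whose centers of symmetry
`(N₁+r₁)/2` and `(N₂+r₂)/2` differ by one. -/
def SumOfTwoGammaPos (f : Polynomial ℚ) : Prop :=
  ∃ (p₁ p₂ : Polynomial ℚ) (r₁ N₁ r₂ N₂ : ℕ),
    IsGammaPos p₁ r₁ N₁ ∧ IsGammaPos p₂ r₂ N₂ ∧ f = p₁ + p₂ ∧
    N₂ + r₂ = N₁ + r₁ + 2


open Equiv Equiv.Perm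

namespace SG

variable {n : ℕ}

/-- extend a permutation of `Fin n` to `Fin (n+1)` fixing the last element -/
def pext (π : Perm (Fin n)) : Perm (Fin (n + 1)) :=
  (finSuccEquivLast (n := n)).symm.permCongr π.optionCongr

@[simp] lemma pext_castSucc (π : Perm (Fin n)) (i : Fin n) :
    pext π i.castSucc = (π i).castSucc := by
  simp [pext, Equiv.permCongr_apply]

@[simp] lemma pext_last (π : Perm (Fin n)) : pext π (Fin.last n) = Fin.last n := by
  simp [pext, Equiv.permCongr_apply]

@[simp] lemma sign_pext (π : Perm (Fin n)) : sign (pext π) = sign π := by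
  rw [pext, sign_permCongr, Equiv.optionCongr_sign]

/-- insert the last element into the cycle after position `i` -/
def pins (π : Perm (Fin n)) (i : Fin n) : Perm (Fin (n + 1)) :=
  pext π * Equiv.swap i.castSucc (Fin.last n)

lemma pins_def (π : Perm (Fin n)) (i : Fin n) :
    pins π i = pext π * Equiv.swap i.castSucc (Fin.last n) := rfl

lemma pins_castSucc_self (π : Perm (Fin n)) (i : Fin n) :
    pins π i i.castSucc = Fin.last n := by
  simp [pins, Equiv.Perm.mul_apply]

lemma pins_last (π : Perm (Fin n)) (i : Fin n) :
    pins π i (Fin.last n) = (π i).castSucc := by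
  simp [pins, Equiv.Perm.mul_apply]

lemma pins_castSucc (π : Perm (Fin n)) (i j : Fin n) (h : j ≠ i) :
    pins π i j.castSucc = (π j).castSucc := by
  have h1 : j.castSucc ≠ i.castSucc := by
    simpa [Fin.castSucc_inj] using h
  have h2 : j.castSucc ≠ Fin.last n := (Fin.castSucc_lt_last j).ne
  simp [pins, Equiv.Perm.mul_apply, Equiv.swap_apply_of_ne_of_ne h1 h2]

lemma sign_pins (π : Perm (Fin n)) (i : Fin n) : sign (pins π i) = - sign π := by
  rw [pins, Equiv.Perm.sign_mul, sign_pext,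
    Equiv.Perm.sign_swap (Fin.castSucc_lt_last i).ne, mul_neg, mul_one]


/-- the combined insertion map -/
def pE (x : Perm (Fin n) × Option (Fin n)) : Perm (Fin (n + 1)) :=
  x.2.elim (pext x.1) (pins x.1)

lemma pext_injective : Function.Injective (pext (n := n)) := by
  intro π π' h
  ext i
  have h2 := congrArg (fun σ : Perm (Fin (n+1)) => σ i.castSucc) h
  simp only [pext_castSucc, Fin.castSucc_inj] at h2
  rw [h2]

lemma pE_injective : Function.Injective (pE (n := n)) := by
  rintro ⟨π, o⟩ ⟨π', o'⟩ h
  match o, o' with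
  | none, none =>
    simp only [pE, Option.elim] at h
    simp [pext_injective h]
  | none, some i' =>
    exfalso
    have := congrArg (fun σ : Perm (Fin (n+1)) => σ (Fin.last n)) h
    simp only [pE, Option.elim, pext_last, pins_last] at this
    exact (Fin.castSucc_lt_last (π' i')).ne this.symm
  | some i, none =>
    exfalso
    have := congrArg (fun σ : Perm (Fin (n+1)) => σ (Fin.last n)) h
    simp only [pE, Option.elim, pext_last, pins_last] at this
    exact (Fin.castSucc_lt_last (π i)).ne this
  | some i, some i' =>
    simp only [pE, Option.elim] at h
    have hii : i = i' := by
      by_contra hne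
      have hc := congrArg (fun σ : Perm (Fin (n+1)) => σ i.castSucc) h
      rw [pins_castSucc_self, pins_castSucc π' i' i (by simpa using hne)] at hc
      exact (Fin.castSucc_lt_last (π' i)).ne' hc
    subst hii
    have hπ : pext π = pext π' := by
      have := h
      rw [pins_def, pins_def] at this
      exact mul_right_cancel this
    simp [pext_injective hπ]

lemma pE_bijective : Function.Bijective (pE (n := n)) := by
  rw [Fintype.bijective_iff_injective_and_card]
  refine ⟨pE_injective, ?_⟩
  simp [Fintype.card_perm, Nat.factorial_succ, mul_comm]

/-- master sum decomposition -/
lemma sum_perm_succ {M : Type*} [AddCommMonoid M] (F : Perm (Fin (n + 1)) → M) :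
    ∑ τ : Perm (Fin (n + 1)), F τ
      = ∑ π : Perm (Fin n), (F (pext π) + ∑ i : Fin n, F (pins π i)) := by
  rw [← Fintype.sum_bijective pE pE_bijective _ F (fun x => rfl)]
  rw [Fintype.sum_prod_type]
  refine Fintype.sum_congr _ _ fun π => ?_
  rw [Fintype.sum_option]
  rfl


lemma excA_sum (τ : Perm (Fin n)) : excA τ = ∑ i : Fin n, if i < τ i then 1 else 0 := by
  rw [excA, Finset.card_filter]

lemma excA_pext (π : Perm (Fin n)) : excA (pext π) = excA π := by
  rw [excA_sum, excA_sum, Fin.sum_univ_castSucc]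
  simp [pext_castSucc, pext_last, Fin.castSucc_lt_castSucc_iff]

lemma excA_pins (π : Perm (Fin n)) (i : Fin n) :
    excA (pins π i) = if i < π i then excA π else excA π + 1 := by
  rw [excA_sum, excA_sum, Fin.sum_univ_castSucc]
  have hlast : ¬ (Fin.last n < pins π i (Fin.last n)) := by
    rw [pins_last]; exact (Fin.castSucc_lt_last (π i)).le.not_gt
  rw [if_neg hlast, add_zero]
  have key : ∀ j : Fin n, (if j.castSucc < pins π i j.castSucc then 1 else 0)
      = (if j = i then 1 else (if j < π j then 1 else 0)) := by
    intro j
    by_cases hj : j = i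
    · subst hj
      rw [pins_castSucc_self, if_pos (Fin.castSucc_lt_last j), if_pos rfl]
    · rw [pins_castSucc π i j hj, if_neg hj]
      simp [Fin.castSucc_lt_castSucc_iff]
  rw [Finset.sum_congr rfl (fun j _ => key j)]
  have hupd : (∑ j : Fin n, if j = i then 1 else (if j < π j then 1 else 0 : ℕ))
      = 1 + ∑ j ∈ Finset.univ.erase i, (if j < π j then 1 else 0 : ℕ) := by
    rw [← Finset.add_sum_erase Finset.univ _ (Finset.mem_univ i), if_pos rfl]
    congr 1
    exact Finset.sum_congr rfl (fun j hj => if_neg (Finset.mem_erase.1 hj).1)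
  rw [hupd]
  have hsplit : (∑ j : Fin n, if j < π j then 1 else 0 : ℕ)
      = (if i < π i then 1 else 0) + ∑ j ∈ Finset.univ.erase i, (if j < π j then 1 else 0 : ℕ) :=
    (Finset.add_sum_erase Finset.univ _ (Finset.mem_univ i)).symm
  by_cases hfi : i < π i
  · rw [if_pos hfi, hsplit, if_pos hfi]
  · rw [if_neg hfi, hsplit, if_neg hfi, zero_add, add_comm]


noncomputable def Sp (n : ℕ) : Polynomial ℚ := ∑ π : Perm (Fin n), X ^ excA π
noncomputable def Dp (n : ℕ) : Polynomial ℚ :=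
  ∑ π : Perm (Fin n), C (((sign π : ℤˣ) : ℤ) : ℚ) * X ^ excA π

lemma excA_le (π : Perm (Fin n)) : excA π ≤ n := by
  calc excA π ≤ Finset.univ.card := Finset.card_filter_le _ _
  _ = n := by simp

lemma ins_sum (π : Perm (Fin n)) :
    ∑ i : Fin n, (X : Polynomial ℚ) ^ excA (pins π i)
      = C ((excA π : ℚ)) * X ^ excA π + C ((n : ℚ) - excA π) * X ^ (excA π + 1) := by
  have h1 : ∀ i : Fin n, (X : Polynomial ℚ) ^ excA (pins π i)
      = if i < π i then X ^ excA π else X ^ (excA π + 1) := by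
    intro i; rw [excA_pins, apply_ite (fun m => (X : Polynomial ℚ) ^ m)]
  rw [Finset.sum_congr rfl (fun i _ => h1 i), Finset.sum_ite, Finset.sum_const,
    Finset.sum_const]
  have hc1 : (Finset.univ.filter (fun i => i < π i)).card = excA π := rfl
  have hc2 : (Finset.univ.filter (fun i => ¬ i < π i)).card = n - excA π := by
    have := Finset.card_filter_add_card_filter_not
      (s := (Finset.univ : Finset (Fin n))) (p := fun i => i < π i)
    simp only [Finset.card_univ, Fintype.card_fin] at this
    omega
  rw [hc1, hc2, nsmul_eq_mul, nsmul_eq_mul]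
  have : ((n - excA π : ℕ) : Polynomial ℚ) = C ((n : ℚ) - excA π) := by
    rw [Nat.cast_sub (excA_le π)]
    push_cast
    simp [map_sub]
  rw [this]
  simp [Polynomial.C_eq_natCast]

lemma Tform (e m : ℕ) :
    C ((e : ℚ)) * X ^ e + C ((m : ℚ) - e) * X ^ (e + 1)
      = C ((m : ℚ)) * X ^ (e + 1) + (X - X ^ 2) * derivative ((X : Polynomial ℚ) ^ e) := by
  rw [derivative_X_pow]
  cases e with
  | zero => simp
  | succ k =>
    have h : (k + 1 - 1 : ℕ) = k := rfl
    rw [h]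
    have h2 : C ((m : ℚ) - (k+1 : ℕ)) = C ((m:ℚ)) - C (((k+1 : ℕ) : ℚ)) := by
      rw [map_sub]
    rw [h2]
    ring

lemma Sp_rec : Sp (n + 1) = Sp n + C ((n : ℚ)) * X * Sp n + (X - X ^ 2) * derivative (Sp n) := by
  have h1 : ∀ π : Perm (Fin n),
      ((X : Polynomial ℚ) ^ excA (pext π) + ∑ i : Fin n, (X : Polynomial ℚ) ^ excA (pins π i))
      = X ^ excA π + (C ((n : ℚ)) * X * X ^ excA π
          + (X - X ^ 2) * derivative ((X : Polynomial ℚ) ^ excA π)) := by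
    intro π
    rw [excA_pext, ins_sum, Tform _ n]
    ring
  have hR : Sp n + C ((n : ℚ)) * X * Sp n + (X - X ^ 2) * derivative (Sp n)
      = ∑ π : Perm (Fin n), (X ^ excA π + (C ((n : ℚ)) * X * X ^ excA π
          + (X - X ^ 2) * derivative ((X : Polynomial ℚ) ^ excA π))) := by
    rw [Sp, map_sum derivative, Finset.mul_sum, Finset.mul_sum,
      ← Finset.sum_add_distrib, ← Finset.sum_add_distrib]
    refine Finset.sum_congr rfl (fun π _ => ?_)
    ring
  rw [Sp, sum_perm_succ (fun τ => (X : Polynomial ℚ) ^ excA τ), hR]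
  exact Finset.sum_congr rfl (fun π _ => h1 π)

lemma Dp_rec : Dp (n + 1) = Dp n - C ((n : ℚ)) * X * Dp n - (X - X ^ 2) * derivative (Dp n) := by
  have h1 : ∀ π : Perm (Fin n),
      (C (((sign (pext π) : ℤˣ) : ℤ) : ℚ) * X ^ excA (pext π)
        + ∑ i : Fin n, C (((sign (pins π i) : ℤˣ) : ℤ) : ℚ) * X ^ excA (pins π i))
      = C (((sign π : ℤˣ) : ℤ) : ℚ) * X ^ excA π
        - (C ((n : ℚ)) * X * (C (((sign π : ℤˣ) : ℤ) : ℚ) * X ^ excA π)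
          + (X - X ^ 2) * derivative (C (((sign π : ℤˣ) : ℤ) : ℚ) * (X : Polynomial ℚ) ^ excA π)) := by
    intro π
    have h2 : ∀ i : Fin n, C (((sign (pins π i) : ℤˣ) : ℤ) : ℚ) * X ^ excA (pins π i)
        = - (C (((sign π : ℤˣ) : ℤ) : ℚ) * X ^ excA (pins π i)) := by
      intro i
      rw [sign_pins, Units.val_neg]
      push_cast
      rw [map_neg]
      ring
    rw [excA_pext, sign_pext, Finset.sum_congr rfl (fun i _ => h2 i), Finset.sum_neg_distrib,
      ← Finset.mul_sum, ins_sum, Tform _ n, derivative_C_mul]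
    ring
  have hR : Dp n - C ((n : ℚ)) * X * Dp n - (X - X ^ 2) * derivative (Dp n)
      = ∑ π : Perm (Fin n), (C (((sign π : ℤˣ) : ℤ) : ℚ) * X ^ excA π
        - (C ((n : ℚ)) * X * (C (((sign π : ℤˣ) : ℤ) : ℚ) * X ^ excA π)
          + (X - X ^ 2) * derivative (C (((sign π : ℤˣ) : ℤ) : ℚ) * (X : Polynomial ℚ) ^ excA π))) := by
    rw [Dp, map_sum derivative, Finset.mul_sum, Finset.mul_sum,
      ← Finset.sum_sub_distrib, ← Finset.sum_sub_distrib]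
    refine Finset.sum_congr rfl (fun π _ => ?_)
    ring
  rw [Dp, sum_perm_succ (fun τ => C (((sign τ : ℤˣ) : ℤ) : ℚ) * X ^ excA τ), hR]
  exact Finset.sum_congr rfl (fun π _ => h1 π)

lemma excA_one : excA (1 : Perm (Fin n)) = 0 := by
  simp [excA]

lemma Dp_one : Dp 1 = 1 := by
  rw [Dp]
  rw [Fintype.sum_subsingleton _ (1 : Perm (Fin 1))]
  simp [excA_one]

lemma Dp_closed : ∀ n : ℕ, Dp (n + 1) = (1 - X) ^ n := by
  intro n
  induction n with
  | zero => simpa using Dp_one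
  | succ m ih =>
    rw [Dp_rec, ih]
    rw [derivative_pow]
    have hd : derivative (1 - X : Polynomial ℚ) = -1 := by
      simp
    rw [hd]
    cases m with
    | zero => simp
    | succ k =>
      have h : (k + 1 - 1 : ℕ) = k := rfl
      rw [h]
      have h2 : C (((k+1 : ℕ) : ℚ) + 1) = C (((k+1:ℕ):ℚ)) + 1 := by
        rw [map_add, map_one]
      push_cast at h2 ⊢
      rw [h2]
      ring


lemma Sp_one : Sp 1 = 1 := by
  rw [Sp]
  rw [Fintype.sum_subsingleton _ (1 : Perm (Fin 1))]
  simp [excA_one]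

/-- gamma vector of the excedance Eulerian polynomial `Sp n` -/
def gam : ℕ → ℕ → ℚ
  | 0, _ => 0
  | 1, 0 => 1
  | 1, _ + 1 => 0
  | n + 2, 0 => gam (n + 1) 0
  | n + 2, j + 1 =>
      ((j : ℚ) + 2) * gam (n + 1) (j + 1) + (2 * ((n : ℚ) + 2) - 4 * ((j : ℚ) + 1)) * gam (n + 1) j

lemma gam_one_zero : gam 1 0 = 1 := rfl

lemma gam_zero_of_le : ∀ n j : ℕ, 1 ≤ n → n ≤ 2 * j → gam n j = 0 := by
  intro n
  induction n with
  | zero => intro j h; omega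
  | succ m ih =>
    intro j h1 h2
    match m, j with
    | 0, 0 => omega
    | 0, j + 1 => rfl
    | m + 1, 0 => omega
    | m + 1, j + 1 =>
      show ((j : ℚ) + 2) * gam (m + 1) (j + 1) + (2 * ((m : ℚ) + 2) - 4 * ((j : ℚ) + 1)) * gam (m + 1) j = 0
      rcases Nat.lt_or_ge (m + 1) (2 * (j + 1)) with hlt | hge
      · -- m + 1 ≤ 2j + 1, so m ≤ 2j
        have hz1 : gam (m + 1) (j + 1) = 0 := ih (j + 1) (by omega) (by omega)
        rcases Nat.lt_or_ge (m + 1) (2 * j) with h2' | h3'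
        · rw [hz1, ih j (by omega) (by omega)]; ring
        · -- m + 1 = 2j or 2j + 1 ; since m+2 ≤ 2(j+1) we have m ≤ 2j; coefficient zero when m+2 = 2j+2
          have : m = 2 * j ∨ m + 1 = 2 * j := by omega
          rcases this with h | h
          · have : (2 * ((m : ℚ) + 2) - 4 * ((j : ℚ) + 1)) = 0 := by
              have : (m : ℚ) = 2 * j := by exact_mod_cast congrArg (fun x : ℕ => (x : ℚ)) h
              rw [this]; ring
            rw [hz1, this]; ring
          · rw [hz1, ih j (by omega) (by omega)]; ring
      · omega

lemma gam_nonneg : ∀ n j : ℕ, 0 ≤ gam n j := by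
  intro n
  induction n with
  | zero => intro j; exact le_of_eq rfl
  | succ m ih =>
    intro j
    match m, j with
    | 0, 0 => norm_num [gam_one_zero]
    | 0, j + 1 => exact le_of_eq rfl
    | m + 1, 0 => exact ih 0
    | m + 1, j + 1 =>
      show 0 ≤ ((j : ℚ) + 2) * gam (m + 1) (j + 1) + (2 * ((m : ℚ) + 2) - 4 * ((j : ℚ) + 1)) * gam (m + 1) j
      rcases Nat.lt_or_ge (m + 1) (2 * j) with hlt | hge
      · rw [gam_zero_of_le (m+1) (j+1) (by omega) (by omega), gam_zero_of_le (m+1) j (by omega) (by omega)]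
        norm_num
      · have hc : (0 : ℚ) ≤ 2 * ((m : ℚ) + 2) - 4 * ((j : ℚ) + 1) ∨ gam (m + 1) j = 0 := by
          rcases Nat.lt_or_ge m (2 * j) with h1 | h2
          · right
            exact gam_zero_of_le (m+1) j (by omega) (by omega)
          · left
            have : (2 * (j : ℕ) : ℚ) ≤ (m : ℚ) := by exact_mod_cast Nat.cast_le.2 h2
            push_cast at this ⊢
            linarith
        have t1 : 0 ≤ ((j : ℚ) + 2) * gam (m + 1) (j + 1) := by
          have := ih (j + 1)
          positivity
        rcases hc with h | h
        · have := ih j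
          nlinarith
        · rw [h]; nlinarith

lemma gam_rec (n j : ℕ) : gam (n+2) (j+1)
    = ((j : ℚ) + 2) * gam (n + 1) (j + 1) + (2 * ((n : ℚ) + 2) - 4 * ((j : ℚ) + 1)) * gam (n + 1) j := rfl

lemma gam_succ_zero (n : ℕ) : gam (n + 2) 0 = gam (n + 1) 0 := rfl

lemma gam_zero_eq_one : ∀ n : ℕ, gam (n + 1) 0 = 1 := by
  intro n
  induction n with
  | zero => rfl
  | succ m ih => rw [gam_succ_zero, ih]

lemma gam_succ_ge (n j : ℕ) (h : 2 * j ≤ n + 1) : gam n j ≤ gam (n + 1) j := by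
  match n, j with
  | 0, j => cases j with
    | zero => norm_num [gam_zero_eq_one, gam]
    | succ i => exact le_of_eq rfl |>.trans (le_of_eq rfl) |>.trans (gam_nonneg 1 (i+1)) |>.trans (le_of_eq rfl)
  | n + 1, 0 => exact le_of_eq (gam_succ_zero n).symm
  | n + 1, j + 1 =>
    rw [gam_rec]
    have h1 := gam_nonneg (n + 1) (j + 1)
    have h2 := gam_nonneg (n + 1) j
    have hc : (0 : ℚ) ≤ 2 * ((n : ℚ) + 2) - 4 * ((j : ℚ) + 1) := by
      have : ((2 * (j + 1) : ℕ) : ℚ) ≤ ((n + 2 : ℕ) : ℚ) := Nat.cast_le.2 (by omega)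
      push_cast at this
      linarith
    nlinarith

lemma gam42 : gam 2 1 = 0 := by
  rw [show (2 : ℕ) = 0 + 2 from rfl, gam_rec]
  try norm_num [gam]

lemma gam31 : gam 3 1 = 2 := by
  rw [show (3 : ℕ) = 1 + 2 from rfl, gam_rec, gam42, gam_zero_eq_one]
  try norm_num

lemma gam41 : gam 4 1 = 8 := by
  rw [show (4 : ℕ) = 2 + 2 from rfl, gam_rec, gam31, gam_zero_eq_one]
  norm_num

lemma gam_ge : ∀ k : ℕ, 1 ≤ k → ∀ j : ℕ, (4 : ℚ) ^ j * (Nat.choose k j) ≤ gam (2 * k + 2) j := by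
  intro k
  induction k with
  | zero => omega
  | succ m ih =>
    intro _ j
    rcases Nat.eq_or_lt_of_le (Nat.one_le_iff_ne_zero.2 (Nat.succ_ne_zero m)) with h1 | h1
    · -- m + 1 = 1, base case k = 1
      have hm : m = 0 := by omega
      subst hm
      match j with
      | 0 => simp [gam_zero_eq_one 3]
      | 1 => rw [show 2 * 1 + 2 = 4 from rfl, gam41]; norm_num
      | (i + 2) =>
        rw [Nat.choose_eq_zero_of_lt (by omega)]
        simpa using gam_nonneg 4 (i + 2)
    · -- m ≥ 1
      have hm : 1 ≤ m := by omega
      match j with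
      | 0 => simp [gam_zero_eq_one]
      | i + 1 =>
        rcases Nat.lt_or_ge (m + 1) (i + 1) with hbig | hle
        · rw [Nat.choose_eq_zero_of_lt hbig]
          simpa using gam_nonneg (2 * (m + 1) + 2) (i + 1)
        · -- i ≤ m
          have hi : i ≤ m := by omega
          have e1 : 2 * (m + 1) + 2 = (2 * m + 2) + 2 := by ring
          have e2 : 2 * m + 3 = (2 * m + 1) + 2 := by ring
          have r1 : gam (2 * (m + 1) + 2) (i + 1)
              = ((i : ℚ) + 2) * gam (2 * m + 3) (i + 1)
                + (2 * (((2 * m + 2 : ℕ) : ℚ) + 2) - 4 * ((i : ℚ) + 1)) * gam (2 * m + 3) i := by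
            rw [e1, gam_rec]
          have r2 : gam (2 * m + 3) (i + 1)
              = ((i : ℚ) + 2) * gam (2 * m + 2) (i + 1)
                + (2 * (((2 * m + 1 : ℕ) : ℚ) + 2) - 4 * ((i : ℚ) + 1)) * gam (2 * m + 2) i := by
            rw [e2, gam_rec]
          have mono : gam (2 * m + 2) i ≤ gam (2 * m + 3) i :=
            gam_succ_ge (2 * m + 2) i (by omega)
          have hg1 := ih hm (i + 1)
          have hg2 := ih hm i
          have hn1 := gam_nonneg (2 * m + 2) (i + 1)
          have hn2 := gam_nonneg (2 * m + 2) i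
          have hn3 := gam_nonneg (2 * m + 3) (i + 1)
          have hn4 := gam_nonneg (2 * m + 3) i
          have hiq : (i : ℚ) ≤ (m : ℚ) := Nat.cast_le.2 hi
          have hpascal : ((Nat.choose (m + 1) (i + 1) : ℕ) : ℚ)
              = ((Nat.choose m i : ℕ) : ℚ) + ((Nat.choose m (i + 1) : ℕ) : ℚ) := by
            rw [← Nat.cast_add, ← Nat.choose_succ_succ]
          have hc1 : (4 : ℚ) ≤ 2 * (((2 * m + 2 : ℕ) : ℚ) + 2) - 4 * ((i : ℚ) + 1) := by
            push_cast; linarith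
          have hc2 : (0 : ℚ) ≤ 2 * (((2 * m + 1 : ℕ) : ℚ) + 2) - 4 * ((i : ℚ) + 1) := by
            push_cast; linarith
          -- combine
          rw [r1]
          have key1 : gam (2 * m + 2) (i + 1) ≤ gam (2 * m + 3) (i + 1) := by
            rw [r2]; nlinarith
          have step1 : (4:ℚ)^(i+1) * (Nat.choose m (i+1)) + 4 * ((4:ℚ)^i * (Nat.choose m i))
              ≤ ((i : ℚ) + 2) * gam (2 * m + 3) (i + 1)
                + (2 * (((2 * m + 2 : ℕ) : ℚ) + 2) - 4 * ((i : ℚ) + 1)) * gam (2 * m + 3) i := by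
            have l1 : (4:ℚ)^(i+1) * (Nat.choose m (i+1)) ≤ ((i : ℚ) + 2) * gam (2 * m + 3) (i + 1) := by
              nlinarith [hg1.trans key1]
            have l2 : 4 * ((4:ℚ)^i * (Nat.choose m i))
                ≤ (2 * (((2 * m + 2 : ℕ) : ℚ) + 2) - 4 * ((i : ℚ) + 1)) * gam (2 * m + 3) i := by
              nlinarith [hg2.trans mono]
            linarith
          calc (4 : ℚ) ^ (i+1) * (Nat.choose (m+1) (i+1))
              = (4:ℚ)^(i+1) * (Nat.choose m (i+1)) + 4 * ((4:ℚ)^i * (Nat.choose m i)) := by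
                rw [hpascal]; ring
            _ ≤ _ := step1


/-- basis term -/
noncomputable def tm (g : ℚ) (j e : ℕ) : Polynomial ℚ := C g * X ^ j * (1 + X) ^ e

lemma tm_zero (j e : ℕ) : tm 0 j e = 0 := by simp [tm]

lemma I1 (g : ℚ) (j e m : ℕ) (hm : m = 2 * j + e + 1) :
    tm g j e + C ((m : ℚ)) * X * tm g j e + (X - X ^ 2) * derivative (tm g j e)
      = tm (((j : ℚ) + 1) * g) j (e + 1) + tm (2 * (e : ℚ) * g) (j + 1) (e - 1) := by
  subst hm
  have hd : derivative (tm g j e) = C g * (C ((j:ℚ)) * X ^ (j-1) * (1+X)^e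
      + C ((e:ℚ)) * X ^ j * (1+X)^(e-1)) := by
    rw [tm, derivative_mul, derivative_mul, derivative_C, derivative_X_pow, derivative_pow]
    simp
    ring
  rw [hd]
  cases j with
  | zero =>
    cases e with
    | zero =>
      simp only [tm, Nat.zero_sub, Nat.add_sub_cancel, pow_zero, Nat.cast_zero, map_zero,
        zero_mul, mul_zero, add_zero, zero_add, map_mul, map_add, C_eq_natCast, map_one,
        map_natCast, Nat.cast_ofNat, map_ofNat]
      push_cast
      ring
    | succ e' =>
      simp only [tm, Nat.zero_sub, Nat.add_sub_cancel, pow_zero, Nat.cast_zero, map_zero,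
        zero_mul, mul_zero, add_zero, zero_add, map_mul, map_add, C_eq_natCast, map_one,
        map_natCast, Nat.cast_ofNat, map_ofNat]
      push_cast
      ring
  | succ j' =>
    cases e with
    | zero =>
      simp only [tm, Nat.zero_sub, Nat.add_sub_cancel, pow_zero, Nat.cast_zero, map_zero,
        zero_mul, mul_zero, add_zero, zero_add, map_mul, map_add, C_eq_natCast, map_one,
        map_natCast, Nat.cast_ofNat, map_ofNat]
      push_cast
      ring
    | succ e' =>
      simp only [tm, Nat.zero_sub, Nat.add_sub_cancel, pow_zero, Nat.cast_zero, map_zero,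
        zero_mul, mul_zero, add_zero, zero_add, map_mul, map_add, C_eq_natCast, map_one,
        map_natCast, Nat.cast_ofNat, map_ofNat]
      push_cast
      ring

lemma Sp_expand : ∀ n : ℕ, Sp (n + 1)
    = ∑ j ∈ Finset.range (n + 1), tm (gam (n + 1) j) j (n - 2 * j) := by
  intro n
  induction n with
  | zero => simp [Sp_one, tm, gam_one_zero]
  | succ n ih =>
    rw [Sp_rec, ih]
    -- push the operator through the sum
    have hop : ∑ j ∈ Finset.range (n + 1), tm (gam (n + 1) j) j (n - 2 * j)
        + C (((n+1 : ℕ) : ℚ)) * X * (∑ j ∈ Finset.range (n + 1), tm (gam (n + 1) j) j (n - 2 * j))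
        + (X - X ^ 2) * derivative (∑ j ∈ Finset.range (n + 1), tm (gam (n + 1) j) j (n - 2 * j))
        = ∑ j ∈ Finset.range (n + 1),
            (tm (gam (n + 1) j) j (n - 2 * j)
              + C (((n+1 : ℕ) : ℚ)) * X * tm (gam (n + 1) j) j (n - 2 * j)
              + (X - X ^ 2) * derivative (tm (gam (n + 1) j) j (n - 2 * j))) := by
      rw [map_sum derivative, Finset.mul_sum, Finset.mul_sum,
        ← Finset.sum_add_distrib, ← Finset.sum_add_distrib]
    rw [hop]
    -- apply I1 termwise (or zero out padding terms)
    have hterm : ∀ j ∈ Finset.range (n + 1),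
        (tm (gam (n + 1) j) j (n - 2 * j)
          + C (((n+1 : ℕ) : ℚ)) * X * tm (gam (n + 1) j) j (n - 2 * j)
          + (X - X ^ 2) * derivative (tm (gam (n + 1) j) j (n - 2 * j)))
        = tm (((j : ℚ) + 1) * gam (n + 1) j) j ((n - 2 * j) + 1)
          + tm (2 * ((n - 2 * j : ℕ) : ℚ) * gam (n + 1) j) (j + 1) ((n - 2 * j) - 1) := by
      intro j _
      by_cases hj : 2 * j ≤ n
      · exact I1 _ j (n - 2 * j) (n + 1) (by omega)
      · have hz : gam (n + 1) j = 0 := gam_zero_of_le _ _ (by omega) (by omega)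
        rw [hz]
        simp [tm_zero, mul_zero, tm]
    rw [Finset.sum_congr rfl hterm, Finset.sum_add_distrib]
    -- now compare with the target sum
    rw [Finset.sum_range_succ' (fun j => tm (gam (n + 2) j) j (n + 1 - 2 * j)) (n + 1)]
    have hT : ∑ j ∈ Finset.range (n + 1), tm (gam (n + 2) (j + 1)) (j + 1) (n + 1 - 2 * (j + 1))
        = (∑ j ∈ Finset.range (n + 1),
            tm (((j : ℚ) + 2) * gam (n + 1) (j + 1)) (j + 1) (n + 1 - 2 * (j + 1)))
          + ∑ j ∈ Finset.range (n + 1),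
            tm ((2 * ((n : ℚ) + 2) - 4 * ((j : ℚ) + 1)) * gam (n + 1) j) (j + 1) (n + 1 - 2 * (j + 1)) := by
      rw [← Finset.sum_add_distrib]
      refine Finset.sum_congr rfl (fun j _ => ?_)
      rw [gam_rec, tm, tm, tm, map_add]
      ring
    have hA : ∑ j ∈ Finset.range (n + 1), tm (((j : ℚ) + 1) * gam (n + 1) j) j ((n - 2 * j) + 1)
        = tm (gam (n + 2) 0) 0 (n + 1 - 2 * 0)
          + ∑ j ∈ Finset.range (n + 1),
              tm (((j : ℚ) + 2) * gam (n + 1) (j + 1)) (j + 1) (n + 1 - 2 * (j + 1)) := by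
      rw [Finset.sum_range_succ'
        (fun j => tm (((j : ℚ) + 1) * gam (n + 1) j) j ((n - 2 * j) + 1)) n]
      rw [Finset.sum_range_succ
        (fun j => tm (((j : ℚ) + 2) * gam (n + 1) (j + 1)) (j + 1) (n + 1 - 2 * (j + 1))) n]
      have hlast : tm (((n : ℚ) + 2) * gam (n + 1) (n + 1)) (n + 1) (n + 1 - 2 * (n + 1)) = 0 := by
        rw [gam_zero_of_le (n + 1) (n + 1) (by omega) (by omega), mul_zero, tm_zero]
      rw [hlast, add_zero]
      have hz : tm ((((0:ℕ) : ℚ) + 1) * gam (n + 1) 0) 0 ((n - 2 * 0) + 1)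
          = tm (gam (n + 2) 0) 0 (n + 1 - 2 * 0) := by
        rw [gam_succ_zero]
        norm_num
      rw [hz, add_comm]
      congr 1
      refine Finset.sum_congr rfl (fun j hj => ?_)
      by_cases hcase : 2 * (j + 1) ≤ n
      · have he : (n - 2 * (j + 1)) + 1 = n + 1 - 2 * (j + 1) := by omega
        have hc : (((j + 1 : ℕ) : ℚ) + 1) = (j : ℚ) + 2 := by push_cast; ring
        rw [he, hc]
      · have hz2 : gam (n + 1) (j + 1) = 0 := gam_zero_of_le _ _ (by omega) (by omega)
        rw [hz2]
        simp [tm]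
    have hB : ∑ j ∈ Finset.range (n + 1),
          tm (2 * ((n - 2 * j : ℕ) : ℚ) * gam (n + 1) j) (j + 1) ((n - 2 * j) - 1)
        = ∑ j ∈ Finset.range (n + 1),
            tm ((2 * ((n : ℚ) + 2) - 4 * ((j : ℚ) + 1)) * gam (n + 1) j) (j + 1) (n + 1 - 2 * (j + 1)) := by
      refine Finset.sum_congr rfl (fun j _ => ?_)
      have he : (n - 2 * j) - 1 = n + 1 - 2 * (j + 1) := by omega
      rw [he]
      by_cases hcase : 2 * j ≤ n
      · have hc : ((n - 2 * j : ℕ) : ℚ) = (n : ℚ) - 2 * j := by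
          rw [Nat.cast_sub hcase]; push_cast; ring
        rw [hc]
        congr 1
        ring
      · have hz2 : gam (n + 1) j = 0 := gam_zero_of_le _ _ (by omega) (by omega)
        rw [hz2]
        simp [tm]
    rw [hA, hB, hT]
    ring


/-- gamma coefficients of (1-X)^(2k) -/
def ccoef (k j : ℕ) : ℚ := (-4 : ℚ) ^ j * (Nat.choose k j)

lemma ccoef_zero (k : ℕ) : ccoef k 0 = 1 := by simp [ccoef]

lemma ccoef_rec (k j : ℕ) : ccoef (k + 1) (j + 1) = ccoef k (j + 1) + (-4) * ccoef k j := by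
  rw [ccoef, ccoef, ccoef, Nat.choose_succ_succ]
  push_cast
  ring

lemma ccoef_top (k j : ℕ) (h : k < j) : ccoef k j = 0 := by
  rw [ccoef, Nat.choose_eq_zero_of_lt h]
  simp

lemma omX : ∀ k : ℕ, ((1 : Polynomial ℚ) - X) ^ (2 * k)
    = ∑ j ∈ Finset.range (k + 1), tm (ccoef k j) j (2 * k - 2 * j) := by
  intro k
  induction k with
  | zero => simp [tm, ccoef]
  | succ k ih =>
    have hsq : ((1 : Polynomial ℚ) - X) ^ (2 * (k + 1))
        = ((1 : Polynomial ℚ) - X) ^ (2 * k) * ((1 + X) ^ 2 - 4 * X) := by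
      have h2 : ((1 : Polynomial ℚ) - X) ^ 2 = (1 + X) ^ 2 - 4 * X := by ring
      rw [show 2 * (k + 1) = 2 * k + 2 from by ring, pow_add, h2]
    rw [hsq, ih, Finset.sum_mul]
    have hterm : ∀ j ∈ Finset.range (k + 1),
        tm (ccoef k j) j (2 * k - 2 * j) * ((1 + X) ^ 2 - 4 * X)
        = tm (ccoef k j) j (2 * (k + 1) - 2 * j) + tm ((-4) * ccoef k j) (j + 1) (2 * k - 2 * j) := by
      intro j hj
      have hjk : j ≤ k := by simpa using Nat.lt_succ_iff.1 (Finset.mem_range.1 hj)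
      have he : 2 * (k + 1) - 2 * j = (2 * k - 2 * j) + 2 := by omega
      rw [he, tm, tm, tm, pow_add]
      rw [map_mul]
      have : C (-4 : ℚ) = -4 := by
        simp [map_neg, map_ofNat]
      rw [this]
      ring
    rw [Finset.sum_congr rfl hterm, Finset.sum_add_distrib]
    -- compare with target
    rw [Finset.sum_range_succ' (fun j => tm (ccoef (k + 1) j) j (2 * (k + 1) - 2 * j)) (k + 1)]
    have hT : ∑ j ∈ Finset.range (k + 1), tm (ccoef (k + 1) (j + 1)) (j + 1) (2 * (k + 1) - 2 * (j + 1))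
        = (∑ j ∈ Finset.range (k + 1), tm (ccoef k (j + 1)) (j + 1) (2 * (k + 1) - 2 * (j + 1)))
          + ∑ j ∈ Finset.range (k + 1), tm ((-4) * ccoef k j) (j + 1) (2 * (k + 1) - 2 * (j + 1)) := by
      rw [← Finset.sum_add_distrib]
      refine Finset.sum_congr rfl (fun j _ => ?_)
      rw [ccoef_rec, tm, tm, tm, map_add]
      ring
    have hB : ∑ j ∈ Finset.range (k + 1), tm ((-4) * ccoef k j) (j + 1) (2 * k - 2 * j)
        = ∑ j ∈ Finset.range (k + 1), tm ((-4) * ccoef k j) (j + 1) (2 * (k + 1) - 2 * (j + 1)) := by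
      refine Finset.sum_congr rfl (fun j _ => ?_)
      have : 2 * k - 2 * j = 2 * (k + 1) - 2 * (j + 1) := by omega
      rw [this]
    have hA : ∑ j ∈ Finset.range (k + 1), tm (ccoef k j) j (2 * (k + 1) - 2 * j)
        = tm (ccoef (k + 1) 0) 0 (2 * (k + 1) - 2 * 0)
          + ∑ j ∈ Finset.range (k + 1), tm (ccoef k (j + 1)) (j + 1) (2 * (k + 1) - 2 * (j + 1)) := by
      rw [Finset.sum_range_succ' (fun j => tm (ccoef k j) j (2 * (k + 1) - 2 * j)) k]
      rw [Finset.sum_range_succ (fun j => tm (ccoef k (j + 1)) (j + 1) (2 * (k + 1) - 2 * (j + 1))) k]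
      rw [ccoef_top k (k + 1) (by omega)]
      rw [show tm 0 (k + 1) (2 * (k + 1) - 2 * (k + 1)) = 0 from by simp [tm]]
      rw [add_zero, ccoef_zero, ccoef_zero, add_comm]
    rw [hA, hB, hT]
    ring

/-- sign equals signAux -/
lemma sign_eq_signAux {m : ℕ} (f : Perm (Fin (m + 2))) : sign f = signAux f := by
  have hsurj : Function.Surjective (MonoidHom.mk' (signAux (n := m + 2)) signAux_mul) := by
    intro a
    rcases Int.units_eq_one_or a with h | h
    · exact ⟨1, by simpa [h] using signAux_one (m + 2)⟩
    · refine ⟨Equiv.swap 0 1, ?_⟩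
      rw [h]
      exact signAux_swap (by simp)
  have := Equiv.Perm.eq_sign_of_surjective_hom hsurj
  rw [← this]
  rfl

lemma signAux_eq_pow {n : ℕ} (f : Perm (Fin n)) :
    signAux f = (-1) ^ ((finPairsLT n).filter (fun x => f x.1 ≤ f x.2)).card := by
  rw [signAux, Finset.prod_ite, Finset.prod_const, Finset.prod_const, one_pow, mul_one]

lemma card_eq_invA {n : ℕ} (f : Perm (Fin n)) :
    ((finPairsLT n).filter (fun x => f x.1 ≤ f x.2)).card = invA f := by
  rw [invA]
  apply Finset.card_bij (fun x _ => ((x.2, x.1) : Fin n × Fin n))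
  · intro x hx
    rw [Finset.mem_filter] at hx
    obtain ⟨hmem, hcond⟩ := hx
    have hlt : x.2 < x.1 := mem_finPairsLT.1 hmem
    refine Finset.mem_filter.2 ⟨Finset.mem_univ _, hlt, ?_⟩
    exact lt_of_le_of_ne hcond (fun hEq => hlt.ne' (f.injective hEq))
  · intro x hx y hy hxy
    obtain ⟨h1, h2⟩ := Prod.mk.injEq _ _ _ _ ▸ hxy
    exact Sigma.ext (by rw [h2]) (by rw [h1])
  · intro p hp
    rw [Finset.mem_filter] at hp
    obtain ⟨-, hlt, hcond⟩ := hp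
    refine ⟨⟨p.2, p.1⟩, Finset.mem_filter.2 ⟨mem_finPairsLT.2 hlt, hcond.le⟩, rfl⟩

lemma even_invA_iff_sign {m : ℕ} (f : Perm (Fin (m + 2))) :
    Even (invA f) ↔ sign f = 1 := by
  rw [sign_eq_signAux, signAux_eq_pow, card_eq_invA]
  constructor
  · intro h
    exact h.neg_one_pow
  · intro h
    by_contra hodd
    rw [(Nat.not_even_iff_odd.1 hodd).neg_one_pow] at h
    exact (by decide : ¬ ((-1 : ℤˣ) = 1)) h


lemma Sp_split (n : ℕ) : Sp n = AexcPt n + AexcMt n := by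
  rw [Sp, AexcPt, AexcMt]
  exact (Finset.sum_filter_add_sum_filter_not Finset.univ _ _).symm

lemma Dp_split (m : ℕ) : Dp (m + 2) = AexcPt (m + 2) - AexcMt (m + 2) := by
  rw [Dp, AexcPt, AexcMt,
    ← Finset.sum_filter_add_sum_filter_not Finset.univ (fun π : Perm (Fin (m+2)) => Even (invA π))]
  congr 1
  · refine Finset.sum_congr rfl (fun π hπ => ?_)
    have h1 : sign π = 1 := (even_invA_iff_sign π).1 (Finset.mem_filter.1 hπ).2
    rw [h1]
    norm_num
  · rw [← Finset.sum_neg_distrib]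
    refine Finset.sum_congr rfl (fun π hπ => ?_)
    have h1 : ¬ (sign π = 1) := fun h => (Finset.mem_filter.1 hπ).2 ((even_invA_iff_sign π).2 h)
    have h2 : sign π = -1 := (Int.units_eq_one_or _).resolve_left h1
    rw [h2]
    norm_num

lemma APt_eq (m : ℕ) : AexcPt (m + 2) = C (1/2 : ℚ) * (Sp (m + 2) + Dp (m + 2)) := by
  rw [Sp_split, Dp_split]
  have h1 : AexcPt (m+2) + AexcMt (m+2) + (AexcPt (m+2) - AexcMt (m+2)) = 2 * AexcPt (m+2) := by
    ring
  have h2 : (C (1/2 : ℚ)) * 2 = 1 := by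
    rw [← map_ofNat C 2, ← map_mul]; norm_num
  rw [h1, ← mul_assoc, h2, one_mul]

lemma AMt_eq (m : ℕ) : AexcMt (m + 2) = C (1/2 : ℚ) * (Sp (m + 2) - Dp (m + 2)) := by
  rw [Sp_split, Dp_split]
  have h1 : AexcPt (m+2) + AexcMt (m+2) - (AexcPt (m+2) - AexcMt (m+2)) = 2 * AexcMt (m+2) := by
    ring
  have h2 : (C (1/2 : ℚ)) * 2 = 1 := by
    rw [← map_ofNat C 2, ← map_mul]; norm_num
  rw [h1, ← mul_assoc, h2, one_mul]



theorem stmt8aux (n : ℕ) (hn : 4 ≤ n) (heven : Even n) :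
    SumOfTwoGammaPos (AexcPt n) ∧ SumOfTwoGammaPos (AexcMt n) := by
  obtain ⟨t, ht⟩ := heven
  obtain ⟨k, rfl⟩ : ∃ k, n = 2 * k + 2 := ⟨t - 1, by omega⟩
  have hk1 : 1 ≤ k := by omega
  clear hn ht
  set a : ℕ → ℚ := fun i => gam (2 * k + 2) i with ha
  set c : ℕ → ℚ := fun i => ccoef k i with hc
  set u : ℕ → ℚ := fun i => (1/2) * (a i + c i) with hu
  set v : ℕ → ℚ := fun i => (1/2) * (a i - c i) with hv
  have hconv : ∀ i, 0 ≤ u i ∧ 0 ≤ v i := by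
    intro i
    have hga := gam_nonneg (2 * k + 2) i
    have hch : (0:ℚ) ≤ 4 ^ i * (Nat.choose k i : ℚ) := by positivity
    by_cases hik : i ≤ k
    · have hge := gam_ge k hk1 i
      rcases Nat.even_or_odd i with he | ho
      · have hcc : c i = 4 ^ i * (Nat.choose k i : ℚ) := by
          rw [hc]; show ccoef k i = _; rw [ccoef, he.neg_pow]
        constructor
        · rw [hu]; simp only; rw [hcc]; nlinarith
        · rw [hv]; simp only; rw [hcc]; nlinarith
      · have hcc : c i = -(4 ^ i * (Nat.choose k i : ℚ)) := by
          rw [hc]; show ccoef k i = _; rw [ccoef, ho.neg_pow]; ring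
        constructor
        · rw [hu]; simp only; rw [hcc]; nlinarith
        · rw [hv]; simp only; rw [hcc]; nlinarith
    · have hcc : c i = 0 := ccoef_top k i (by omega)
      constructor
      · rw [hu]; simp only; rw [hcc]; nlinarith
      · rw [hv]; simp only; rw [hcc]; nlinarith
  have hSp : Sp (2 * k + 2) = ∑ i ∈ Finset.range (k + 1), tm (a i) i (2 * k + 1 - 2 * i) := by
    have h0 := Sp_expand (2 * k + 1)
    rw [show 2 * k + 1 + 1 = 2 * k + 2 from rfl] at h0
    rw [h0]
    refine (Finset.sum_subset (Finset.range_subset_range.2 (by omega)) (fun j _ hj => ?_)).symm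
    have : gam (2 * k + 2) j = 0 :=
      gam_zero_of_le _ _ (by omega) (by simp at hj; omega)
    rw [this]
    simp [tm]
  have hDp : Dp (2 * k + 2) = (1 - X) * ∑ i ∈ Finset.range (k + 1), tm (c i) i (2 * k - 2 * i) := by
    rw [show (2 * k + 2) = (2 * k + 1) + 1 from rfl, Dp_closed, pow_succ', omX]
  constructor
  · refine ⟨∑ i ∈ Finset.range (k + 1), C (u i) * X ^ (0 + i) * (1 + X) ^ (2 * k - 0 - 2 * i),
      ∑ i ∈ Finset.range (k + 1), C (v i) * X ^ (1 + i) * (1 + X) ^ (2 * k + 1 - 1 - 2 * i),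
      0, 2 * k, 1, 2 * k + 1,
      ⟨by omega, u, fun i => (hconv i).1, by rw [show (2 * k - 0)/2 + 1 = k + 1 from by omega]⟩,
      ⟨by omega, v, fun i => (hconv i).2, by rw [show (2 * k + 1 - 1)/2 + 1 = k + 1 from by omega]⟩,
      ?_, by omega⟩
    rw [show (2 * k + 2) = (2 * k) + 2 from rfl, APt_eq (2 * k), hSp, hDp]
    rw [mul_add, Finset.mul_sum, Finset.mul_sum, Finset.mul_sum, ← Finset.sum_add_distrib,
      ← Finset.sum_add_distrib]
    refine Finset.sum_congr rfl (fun i hi => ?_)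
    have hik : i ≤ k := by simp at hi; omega
    have e1 : 2 * k - 0 - 2 * i = 2 * k - 2 * i := by omega
    have e2 : 2 * k + 1 - 1 - 2 * i = 2 * k - 2 * i := by omega
    have e3 : 2 * k + 1 - 2 * i = (2 * k - 2 * i) + 1 := by omega
    rw [e1, e2, e3, tm, tm, hu, hv]
    simp only [map_mul, map_add, map_sub, map_one]
    have hhalf : C ((1:ℚ)/2) = C (1/2 : ℚ) := rfl
    ring
  · refine ⟨∑ i ∈ Finset.range (k + 1), C (v i) * X ^ (0 + i) * (1 + X) ^ (2 * k - 0 - 2 * i),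
      ∑ i ∈ Finset.range (k + 1), C (u i) * X ^ (1 + i) * (1 + X) ^ (2 * k + 1 - 1 - 2 * i),
      0, 2 * k, 1, 2 * k + 1,
      ⟨by omega, v, fun i => (hconv i).2, by rw [show (2 * k - 0)/2 + 1 = k + 1 from by omega]⟩,
      ⟨by omega, u, fun i => (hconv i).1, by rw [show (2 * k + 1 - 1)/2 + 1 = k + 1 from by omega]⟩,
      ?_, by omega⟩
    rw [show (2 * k + 2) = (2 * k) + 2 from rfl, AMt_eq (2 * k), hSp, hDp]
    rw [mul_sub, Finset.mul_sum, Finset.mul_sum, Finset.mul_sum, ← Finset.sum_sub_distrib,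
      ← Finset.sum_add_distrib]
    refine Finset.sum_congr rfl (fun i hi => ?_)
    have hik : i ≤ k := by simp at hi; omega
    have e1 : 2 * k - 0 - 2 * i = 2 * k - 2 * i := by omega
    have e2 : 2 * k + 1 - 1 - 2 * i = 2 * k - 2 * i := by omega
    have e3 : 2 * k + 1 - 2 * i = (2 * k - 2 * i) + 1 := by omega
    rw [e1, e2, e3, tm, tm, hu, hv]
    simp only [map_mul, map_add, map_sub, map_one]
    ring

end SG

theorem stmt8 (n : ℕ) (hn : 4 ≤ n) (heven : Even n) :
    SumOfTwoGammaPos (AexcPt n) ∧ SumOfTwoGammaPos (AexcMt n) :=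
  SG.stmt8aux n hn heven
end

section
/- Let f(t) be a univariate gamma positive polynomial with center of symmetry n/2 whose length (degree minus order of vanishing at 0) is odd. Then f(t) = p_1(t) + p_2(t) where p_1, p_2 are gamma positive with centers of symmetry (n-1)/2 and (n+1)/2 respectively, and both p_1, p_2 have even length. -/
open Finset Polynomial

theorem stmt12 (n : ℕ) (f : Polynomial ℚ) (r N : ℕ)
    (hf : IsGammaPos f r N) (hcen : N + r = n) (hlen : Odd (N - r)) :
    ∃ (p₁ p₂ : Polynomial ℚ) (r₁ N₁ r₂ N₂ : ℕ),
      f = p₁ + p₂ ∧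
      IsGammaPos p₁ r₁ N₁ ∧ N₁ + r₁ = n - 1 ∧ Even (N₁ - r₁) ∧
      IsGammaPos p₂ r₂ N₂ ∧ N₂ + r₂ = n + 1 ∧ Even (N₂ - r₂) := by
  obtain ⟨hrN, γ, hγ, hfeq⟩ := hf
  obtain ⟨m, hm⟩ := hlen
  refine ⟨∑ i ∈ Finset.range ((N - 1 - r) / 2 + 1),
      Polynomial.C (γ i) * Polynomial.X ^ (r + i) * (1 + Polynomial.X) ^ (N - 1 - r - 2 * i),
    ∑ i ∈ Finset.range ((N - (r + 1)) / 2 + 1),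
      Polynomial.C (γ i) * Polynomial.X ^ (r + 1 + i) * (1 + Polynomial.X) ^ (N - (r + 1) - 2 * i),
    r, N - 1, r + 1, N, ?_, ⟨by omega, γ, hγ, rfl⟩, by omega, by
      exact ⟨m, by omega⟩, ⟨by omega, γ, hγ, rfl⟩, by omega, ⟨m, by omega⟩⟩
  have hr : (N - 1 - r) / 2 + 1 = (N - r) / 2 + 1 := by omega
  have hr2 : (N - (r + 1)) / 2 + 1 = (N - r) / 2 + 1 := by omega
  rw [hfeq, hr, hr2, ← Finset.sum_add_distrib]
  refine Finset.sum_congr rfl fun i hi => ?_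
  simp only [Finset.mem_range] at hi
  have h1 : N - r - 2 * i = (N - 1 - r - 2 * i) + 1 := by omega
  have h2 : N - (r + 1) - 2 * i = N - 1 - r - 2 * i := by omega
  rw [h1, h2, pow_succ]
  ring
end

section
/- For all positive integers n, ∑_{π ∈ B_n} (-1)^{inv_B(π)} t^{des_B(π)} s^{asc_B(π)} = (s-t)^n, where B_n is the hyperoctahedral group of signed permutations. -/
open Finset MvPolynomial

/-- A signed permutation of `[n]`, encoded as a pair of an ordinary permutation and a
sign vector: the window entry at position `i` is `±(σ(i))`. -/
abbrev BPerm (n : ℕ) := Equiv.Perm (Fin n) × (Fin n → Bool)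

/-- The window entry `π_i ∈ {±1,…,±n}` of a signed permutation, for `1 ≤ i ≤ n`;
we set `π_0 = 0` (and `0` outside the window). -/
def bval {n : ℕ} (w : BPerm n) (i : ℕ) : ℤ :=
  if h : 1 ≤ i ∧ i ≤ n then
    (if w.2 ⟨i - 1, by omega⟩ then -(((w.1 ⟨i - 1, by omega⟩ : Fin n) : ℕ) + 1 : ℤ)
     else (((w.1 ⟨i - 1, by omega⟩ : Fin n) : ℕ) + 1 : ℤ))
  else 0

/-- Type-B descents: `des_B(π) = #{0 ≤ i ≤ n-1 : π_i > π_{i+1}}` (with `π_0 = 0`). -/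
def desB {n : ℕ} (w : BPerm n) : ℕ :=
  ((Finset.range n).filter (fun i => bval w (i + 1) < bval w i)).card

/-- Type-B ascents: `asc_B(π) = #{0 ≤ i ≤ n-1 : π_i < π_{i+1}}` (with `π_0 = 0`). -/
def ascB {n : ℕ} (w : BPerm n) : ℕ :=
  ((Finset.range n).filter (fun i => bval w i < bval w (i + 1))).card

/-- Type-B inversion number:
`inv_B(π) = #{1 ≤ i < j ≤ n : π_i > π_j} + ∑_{i : π_i < 0} |π_i|`. -/
def invB {n : ℕ} (w : BPerm n) : ℕ :=
  (((Finset.Icc 1 n) ×ˢ (Finset.Icc 1 n)).filter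
      (fun p => p.1 < p.2 ∧ bval w p.2 < bval w p.1)).card +
    ∑ i ∈ (Finset.Icc 1 n).filter (fun i => bval w i < 0), (bval w i).natAbs

/-- Type-B excedances:
`exc_B(π) = #{i ∈ [n] : π_{|π(i)|} > π_i} + #{i ∈ [n] : π_i = -i}`. -/
def excB {n : ℕ} (w : BPerm n) : ℕ :=
  ((Finset.Icc 1 n).filter (fun i => bval w i < bval w ((bval w i).natAbs))).card +
    ((Finset.Icc 1 n).filter (fun i => bval w i = -(i : ℤ))).card

/-- Type-B non-excedances. -/
def nexcB {n : ℕ} (w : BPerm n) : ℕ := n - excB w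

lemma bval_natAbs {n : ℕ} (w : BPerm n) {i : ℕ} (h1 : 1 ≤ i) (h2 : i ≤ n) :
    (bval w i).natAbs = ((w.1 ⟨i - 1, by omega⟩ : Fin n) : ℕ) + 1 := by
  rw [bval, dif_pos ⟨h1, h2⟩]
  split <;> omega

lemma bval_out {n : ℕ} (w : BPerm n) {i : ℕ} (h : ¬(1 ≤ i ∧ i ≤ n)) : bval w i = 0 :=
  dif_neg h

lemma odd_of_zmod {a : ℕ} (h : ((a : ℕ) : ZMod 2) = 1) : Odd a := by
  rw [Nat.odd_iff]
  have h2 : ((a : ℕ) : ZMod 2) = ((1 : ℕ) : ZMod 2) := by simpa using h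
  have := (ZMod.natCast_eq_natCast_iff _ _ _).mp h2
  simpa [Nat.ModEq] using this

lemma count_lemma (n P V : ℕ) (hP : 1 ≤ P) (hPV : P < V) (hV : V ≤ n) :
    ∑ i ∈ Icc 1 n, ∑ j ∈ Icc 1 n,
        (if (i < j ∧ (j = P ∨ (i = P ∧ j ≤ V))) then 1 else 0 : ℕ)
      = (V - P) + (P - 1) := by
  have hinner : ∀ i ∈ Icc 1 n,
      ∑ j ∈ Icc 1 n, (if (i < j ∧ (j = P ∨ (i = P ∧ j ≤ V))) then 1 else 0 : ℕ)
        = (if i = P then V - P else 0) + (if i < P then 1 else 0) := by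
    intro i hi
    rw [mem_Icc] at hi
    by_cases hiP : i = P
    · subst hiP
      rw [if_pos rfl, if_neg (lt_irrefl _), add_zero]
      have hpt : ∀ j ∈ Icc 1 n,
          (if (i < j ∧ (j = i ∨ (i = i ∧ j ≤ V))) then 1 else 0 : ℕ)
            = if j ∈ Icc (i + 1) V then 1 else 0 := by
        intro j hj
        apply if_congr _ rfl rfl
        rw [mem_Icc]
        omega
      rw [Finset.sum_congr rfl hpt, Finset.sum_ite_mem]
      rw [show Icc 1 n ∩ Icc (i + 1) V = Icc (i + 1) V from by
        ext k; simp only [mem_inter, mem_Icc]; omega]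
      rw [Finset.sum_const, Nat.card_Icc, smul_eq_mul, mul_one]
      omega
    · rw [if_neg hiP, zero_add]
      by_cases hiP2 : i < P
      · rw [if_pos hiP2]
        have hpt : ∀ j ∈ Icc 1 n,
            (if (i < j ∧ (j = P ∨ (i = P ∧ j ≤ V))) then 1 else 0 : ℕ)
              = if j = P then 1 else 0 := by
          intro j hj
          apply if_congr _ rfl rfl
          omega
        rw [Finset.sum_congr rfl hpt, Finset.sum_ite_eq' (Icc 1 n) P (fun _ => 1)]
        rw [if_pos (mem_Icc.mpr ⟨hP, by omega⟩)]
      · rw [if_neg hiP2]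
        apply Finset.sum_eq_zero
        intro j hj
        rw [if_neg (by omega)]
  rw [Finset.sum_congr rfl hinner, Finset.sum_add_distrib]
  rw [Finset.sum_ite_eq' (Icc 1 n) P (fun _ => V - P), if_pos (mem_Icc.mpr ⟨hP, by omega⟩)]
  congr 1
  rw [← Finset.card_filter]
  rw [show (Icc 1 n).filter (· < P) = Icc 1 (P - 1) from by
    ext k; simp only [mem_filter, mem_Icc]; omega]
  rw [Nat.card_Icc]; omega

section flip
variable {n : ℕ} {σ : Equiv.Perm (Fin n)} {v p : Fin n}

lemma small_abs (hmax : ∀ u, σ u ≠ u → u ≤ v) (hp : σ p = v)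
    (ε : Fin n → Bool) {i : ℕ} (h1 : 1 ≤ i) (h2 : i ≤ (v : ℕ) + 1)
    (h3 : i ≠ (p : ℕ) + 1) : (bval (σ, ε) i).natAbs < (v : ℕ) + 1 := by
  have hvn : (v : ℕ) < n := v.isLt
  have hin : i ≤ n := by omega
  rw [bval_natAbs _ h1 hin]
  set q : Fin n := ⟨i - 1, by omega⟩ with hq
  have hqval : (q : ℕ) = i - 1 := rfl
  have hqp : q ≠ p := by
    intro h; apply h3
    have := congrArg Fin.val h
    rw [hqval] at this; omega
  have hne : σ q ≠ v := fun h => hqp (σ.injective (by rw [h, hp]))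
  have hnlt : ¬ ((v : ℕ) < ((σ q : Fin n) : ℕ)) := by
    intro h
    have hfix : σ (σ q) = σ q := by
      by_contra hne2
      exact absurd (hmax _ hne2) (not_le.mpr ((Fin.lt_def).mpr h))
    have heq : σ q = q := σ.injective hfix
    have := congrArg Fin.val heq
    rw [hqval] at this; omega
  have hne' : ((σ q : Fin n) : ℕ) ≠ (v : ℕ) := fun h => hne (Fin.ext h)
  simp only [Prod.fst]
  omega

lemma big_abs (hmax : ∀ u, σ u ≠ u → u ≤ v)
    (ε : Fin n → Bool) {i : ℕ} (h1 : (v : ℕ) + 1 < i) (h2 : i ≤ n) :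
    (bval (σ, ε) i).natAbs = i := by
  rw [bval_natAbs _ (by omega) h2]
  set q : Fin n := ⟨i - 1, by omega⟩ with hq
  have hqval : (q : ℕ) = i - 1 := rfl
  have hfix : σ q = q := by
    by_contra h
    have hle := Fin.le_def.mp (hmax _ h)
    rw [hqval] at hle; omega
  simp only [Prod.fst]
  rw [hfix]
  rw [hqval]; omega

lemma P_abs (hp : σ p = v) (ε : Fin n → Bool) :
    (bval (σ, ε) ((p : ℕ) + 1)).natAbs = (v : ℕ) + 1 := by
  rw [bval_natAbs _ (by omega) p.isLt]
  have hmk : (⟨(p : ℕ) + 1 - 1, by omega⟩ : Fin n) = p := by ext; simp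
  simp only [Prod.fst]
  rw [hmk, hp]

lemma bval_flip_ne (ε : Fin n → Bool) (b : Bool) {i : ℕ} (h : i ≠ (p : ℕ) + 1) :
    bval (σ, Function.update ε p b) i = bval (σ, ε) i := by
  by_cases hin : 1 ≤ i ∧ i ≤ n
  · rw [bval, dif_pos hin, bval, dif_pos hin]
    have hne : (⟨i - 1, by omega⟩ : Fin n) ≠ p := by
      intro hh; apply h
      have := congrArg Fin.val hh
      simp at this; omega
    simp [Function.update_of_ne hne]
  · rw [bval_out _ hin, bval_out _ hin]

lemma bval_flip_P (ε : Fin n → Bool) :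
    bval (σ, Function.update ε p (!(ε p))) ((p : ℕ) + 1) = - bval (σ, ε) ((p : ℕ) + 1) := by
  have hin : 1 ≤ (p : ℕ) + 1 ∧ (p : ℕ) + 1 ≤ n := ⟨by omega, p.isLt⟩
  rw [bval, dif_pos hin, bval, dif_pos hin]
  have hmk : (⟨(p : ℕ) + 1 - 1, by omega⟩ : Fin n) = p := by ext; simp
  rw [hmk]
  rcases hb : ε p <;> simp [hb]

lemma desB_flip (hmax : ∀ u, σ u ≠ u → u ≤ v) (hp : σ p = v) (hpv : p < v)
    (ε : Fin n → Bool) :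
    desB (σ, Function.update ε p (!(ε p))) = desB (σ, ε) := by
  have hvn : (v : ℕ) < n := v.isLt
  have hpv' : (p : ℕ) < (v : ℕ) := hpv
  have hPn : (p : ℕ) + 1 < n := by omega
  have ha : (bval (σ, ε) (p : ℕ)).natAbs < (v : ℕ) + 1 := by
    rcases Nat.eq_zero_or_pos (p : ℕ) with h0 | h0
    · rw [h0, bval_out _ (by omega)]; simp
    · exact small_abs hmax hp ε h0 (by omega) (by omega)
  have hb : (bval (σ, ε) ((p : ℕ) + 2)).natAbs < (v : ℕ) + 1 :=
    small_abs hmax hp ε (by omega) (by omega) (by omega)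
  have hP : (bval (σ, ε) ((p : ℕ) + 1)).natAbs = (v : ℕ) + 1 := P_abs hp ε
  have ea : bval (σ, Function.update ε p (!(ε p))) (p : ℕ) = bval (σ, ε) (p : ℕ) :=
    bval_flip_ne ε _ (by omega)
  have eb : bval (σ, Function.update ε p (!(ε p))) ((p : ℕ) + 2) = bval (σ, ε) ((p : ℕ) + 2) :=
    bval_flip_ne ε _ (by omega)
  have eP : bval (σ, Function.update ε p (!(ε p))) ((p : ℕ) + 1) = - bval (σ, ε) ((p : ℕ) + 1) :=
    bval_flip_P ε
  unfold desB
  rw [Finset.card_filter, Finset.card_filter]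
  have hsplit : ∀ F : ℕ → ℕ, ∑ i ∈ range n, F i
      = F (p : ℕ) + F ((p : ℕ) + 1) + ∑ i ∈ ((range n).erase (p : ℕ)).erase ((p : ℕ) + 1), F i := by
    intro F
    rw [← Finset.add_sum_erase _ F (Finset.mem_range.mpr (by omega : (p : ℕ) < n)),
      ← Finset.add_sum_erase _ F (Finset.mem_erase.mpr ⟨by omega, Finset.mem_range.mpr hPn⟩)]
    ring
  rw [hsplit, hsplit]
  congr 1
  · show (if bval _ ((p:ℕ)+1) < bval _ (p:ℕ) then 1 else 0) + (if bval _ ((p:ℕ)+1+1) < bval _ ((p:ℕ)+1) then 1 else 0) = _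
    rw [show (p:ℕ)+1+1 = (p:ℕ)+2 from rfl]
    rw [ea, eb, eP]
    have h1 : (- bval (σ, ε) ((p:ℕ)+1) < bval (σ, ε) (p:ℕ)) ↔ ¬(bval (σ, ε) ((p:ℕ)+1) < bval (σ, ε) (p:ℕ)) := by omega
    have h2 : (bval (σ, ε) ((p:ℕ)+2) < - bval (σ, ε) ((p:ℕ)+1)) ↔ ¬(bval (σ, ε) ((p:ℕ)+2) < bval (σ, ε) ((p:ℕ)+1)) := by omega
    by_cases c1 : bval (σ, ε) ((p:ℕ)+1) < bval (σ, ε) (p:ℕ) <;>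
      by_cases c2 : bval (σ, ε) ((p:ℕ)+2) < bval (σ, ε) ((p:ℕ)+1) <;>
       simp [h1, h2, c1, c2] <;> omega
  · apply Finset.sum_congr rfl
    intro i hi
    rw [Finset.mem_erase, Finset.mem_erase, Finset.mem_range] at hi
    obtain ⟨hi1, hi2, _⟩ := hi
    rw [bval_flip_ne ε _ (by omega), bval_flip_ne ε _ (by omega)]

lemma ascB_flip (hmax : ∀ u, σ u ≠ u → u ≤ v) (hp : σ p = v) (hpv : p < v)
    (ε : Fin n → Bool) :
    ascB (σ, Function.update ε p (!(ε p))) = ascB (σ, ε) := by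
  have hvn : (v : ℕ) < n := v.isLt
  have hpv' : (p : ℕ) < (v : ℕ) := hpv
  have hPn : (p : ℕ) + 1 < n := by omega
  have ha : (bval (σ, ε) (p : ℕ)).natAbs < (v : ℕ) + 1 := by
    rcases Nat.eq_zero_or_pos (p : ℕ) with h0 | h0
    · rw [h0, bval_out _ (by omega)]; simp
    · exact small_abs hmax hp ε h0 (by omega) (by omega)
  have hb : (bval (σ, ε) ((p : ℕ) + 2)).natAbs < (v : ℕ) + 1 :=
    small_abs hmax hp ε (by omega) (by omega) (by omega)
  have hP : (bval (σ, ε) ((p : ℕ) + 1)).natAbs = (v : ℕ) + 1 := P_abs hp ε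
  have ea : bval (σ, Function.update ε p (!(ε p))) (p : ℕ) = bval (σ, ε) (p : ℕ) :=
    bval_flip_ne ε _ (by omega)
  have eb : bval (σ, Function.update ε p (!(ε p))) ((p : ℕ) + 2) = bval (σ, ε) ((p : ℕ) + 2) :=
    bval_flip_ne ε _ (by omega)
  have eP : bval (σ, Function.update ε p (!(ε p))) ((p : ℕ) + 1) = - bval (σ, ε) ((p : ℕ) + 1) :=
    bval_flip_P ε
  unfold ascB
  rw [Finset.card_filter, Finset.card_filter]
  have hsplit : ∀ F : ℕ → ℕ, ∑ i ∈ range n, F i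
      = F (p : ℕ) + F ((p : ℕ) + 1) + ∑ i ∈ ((range n).erase (p : ℕ)).erase ((p : ℕ) + 1), F i := by
    intro F
    rw [← Finset.add_sum_erase _ F (Finset.mem_range.mpr (by omega : (p : ℕ) < n)),
      ← Finset.add_sum_erase _ F (Finset.mem_erase.mpr ⟨by omega, Finset.mem_range.mpr hPn⟩)]
    ring
  rw [hsplit, hsplit]
  congr 1
  · show (if bval _ (p:ℕ) < bval _ ((p:ℕ)+1) then 1 else 0) + (if bval _ ((p:ℕ)+1) < bval _ ((p:ℕ)+1+1) then 1 else 0) = _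
    rw [show (p:ℕ)+1+1 = (p:ℕ)+2 from rfl]
    rw [ea, eb, eP]
    have h1 : (bval (σ, ε) (p:ℕ) < - bval (σ, ε) ((p:ℕ)+1)) ↔ ¬(bval (σ, ε) (p:ℕ) < bval (σ, ε) ((p:ℕ)+1)) := by omega
    have h2 : (- bval (σ, ε) ((p:ℕ)+1) < bval (σ, ε) ((p:ℕ)+2)) ↔ ¬(bval (σ, ε) ((p:ℕ)+1) < bval (σ, ε) ((p:ℕ)+2)) := by omega
    by_cases c1 : bval (σ, ε) (p:ℕ) < bval (σ, ε) ((p:ℕ)+1) <;>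
      by_cases c2 : bval (σ, ε) ((p:ℕ)+1) < bval (σ, ε) ((p:ℕ)+2) <;>
       simp [h1, h2, c1, c2] <;> omega
  · apply Finset.sum_congr rfl
    intro i hi
    rw [Finset.mem_erase, Finset.mem_erase, Finset.mem_range] at hi
    obtain ⟨hi1, hi2, _⟩ := hi
    rw [bval_flip_ne ε _ (by omega), bval_flip_ne ε _ (by omega)]

end flip

section invflip
variable {n : ℕ} {σ : Equiv.Perm (Fin n)} {v p : Fin n}

lemma invB_flip (hmax : ∀ u, σ u ≠ u → u ≤ v) (hp : σ p = v) (hpv : p < v)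
    (ε : Fin n → Bool) :
    Odd (invB (σ, ε) + invB (σ, Function.update ε p (!(ε p)))) := by
  have hvn : (v : ℕ) < n := v.isLt
  have hpv' : (p : ℕ) < (v : ℕ) := hpv
  set ε' := Function.update ε p (!(ε p)) with hε'
  have hP : (bval (σ, ε) ((p : ℕ) + 1)).natAbs = (v : ℕ) + 1 := P_abs hp ε
  have eP : bval (σ, ε') ((p : ℕ) + 1) = - bval (σ, ε) ((p : ℕ) + 1) := bval_flip_P ε
  have hPmem : (p : ℕ) + 1 ∈ Icc 1 n := mem_Icc.mpr ⟨by omega, p.isLt⟩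
  apply odd_of_zmod
  rw [Nat.cast_add]
  unfold invB
  rw [Nat.cast_add, Nat.cast_add]
  have hzz : ∀ t : ZMod 2, t + t = 0 := by decide
  -- B part
  have hBB : ((∑ i ∈ (Icc 1 n).filter (fun i => bval (σ, ε) i < 0), (bval (σ, ε) i).natAbs : ℕ) : ZMod 2)
      + ((∑ i ∈ (Icc 1 n).filter (fun i => bval (σ, ε') i < 0), (bval (σ, ε') i).natAbs : ℕ) : ZMod 2)
      = (((v : ℕ) + 1 : ℕ) : ZMod 2) := by
    rw [Finset.sum_filter, Finset.sum_filter, Nat.cast_sum, Nat.cast_sum,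
      ← Finset.sum_add_distrib]
    have hpt : ∀ i ∈ Icc 1 n,
        (((if bval (σ, ε) i < 0 then (bval (σ, ε) i).natAbs else 0 : ℕ)) : ZMod 2)
          + (((if bval (σ, ε') i < 0 then (bval (σ, ε') i).natAbs else 0 : ℕ)) : ZMod 2)
        = if i = (p : ℕ) + 1 then (((v : ℕ) + 1 : ℕ) : ZMod 2) else 0 := by
      intro i hi
      by_cases hiP : i = (p : ℕ) + 1
      · subst hiP
        rw [if_pos rfl, eP]
        have hc : (- bval (σ, ε) ((p:ℕ)+1) < 0) ↔ ¬(bval (σ, ε) ((p:ℕ)+1) < 0) := by omega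
        by_cases hx : bval (σ, ε) ((p:ℕ)+1) < 0
        · rw [if_pos hx, if_neg (by omega), hP]
          simp
        · rw [if_neg hx, if_pos (by omega), Int.natAbs_neg, hP]
          simp
      · rw [bval_flip_ne ε _ hiP, if_neg hiP]
        exact hzz _
    rw [Finset.sum_congr rfl hpt, Finset.sum_ite_eq' (Icc 1 n) ((p:ℕ)+1) _, if_pos hPmem]
  -- A part
  have hAA : (((((Icc 1 n) ×ˢ (Icc 1 n)).filter
        (fun q => q.1 < q.2 ∧ bval (σ, ε) q.2 < bval (σ, ε) q.1)).card : ℕ) : ZMod 2)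
      + (((((Icc 1 n) ×ˢ (Icc 1 n)).filter
        (fun q => q.1 < q.2 ∧ bval (σ, ε') q.2 < bval (σ, ε') q.1)).card : ℕ) : ZMod 2)
      = ((((v:ℕ)+1 - ((p:ℕ)+1)) + (((p:ℕ)+1) - 1) : ℕ) : ZMod 2) := by
    rw [Finset.card_filter, Finset.card_filter, Nat.cast_sum, Nat.cast_sum,
      ← Finset.sum_add_distrib]
    have hpt : ∀ q ∈ (Icc 1 n) ×ˢ (Icc 1 n),
        (((if q.1 < q.2 ∧ bval (σ, ε) q.2 < bval (σ, ε) q.1 then 1 else 0 : ℕ)) : ZMod 2)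
          + (((if q.1 < q.2 ∧ bval (σ, ε') q.2 < bval (σ, ε') q.1 then 1 else 0 : ℕ)) : ZMod 2)
        = if q.1 < q.2 ∧ (q.2 = (p:ℕ)+1 ∨ (q.1 = (p:ℕ)+1 ∧ q.2 ≤ (v:ℕ)+1)) then 1 else 0 := by
      rintro ⟨i, j⟩ hq
      rw [Finset.mem_product, mem_Icc, mem_Icc] at hq
      obtain ⟨⟨hi1, hi2⟩, hj1, hj2⟩ := hq
      dsimp only
      by_cases hij : i < j
      swap
      · simp [hij]
      by_cases hjP : j = (p:ℕ)+1
      · subst hjP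
        have hiP : i ≠ (p:ℕ)+1 := by omega
        have hai : (bval (σ, ε) i).natAbs < (v:ℕ)+1 :=
          small_abs hmax hp ε hi1 (by omega) hiP
        rw [bval_flip_ne ε _ hiP, eP]
        have h3 : i < (p:ℕ)+1 ∧ ((p:ℕ)+1 = (p:ℕ)+1 ∨ (i = (p:ℕ)+1 ∧ (p:ℕ)+1 ≤ (v:ℕ)+1)) :=
          ⟨hij, Or.inl rfl⟩
        rw [if_pos h3]
        by_cases hcc : bval (σ, ε) ((p:ℕ)+1) < bval (σ, ε) i
        · have h1 : i < (p:ℕ)+1 ∧ bval (σ, ε) ((p:ℕ)+1) < bval (σ, ε) i := ⟨hij, hcc⟩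
          have h2 : ¬(i < (p:ℕ)+1 ∧ -bval (σ, ε) ((p:ℕ)+1) < bval (σ, ε) i) := by
            rintro ⟨-, h⟩; omega
          rw [if_pos h1, if_neg h2]
          simp
        · have h1 : ¬(i < (p:ℕ)+1 ∧ bval (σ, ε) ((p:ℕ)+1) < bval (σ, ε) i) := by
            rintro ⟨-, h⟩; omega
          have h2 : i < (p:ℕ)+1 ∧ -bval (σ, ε) ((p:ℕ)+1) < bval (σ, ε) i := ⟨hij, by omega⟩
          rw [if_neg h1, if_pos h2]
          simp
      · by_cases hiP : i = (p:ℕ)+1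
        · subst hiP
          rw [bval_flip_ne ε _ hjP, eP]
          by_cases hjV : j ≤ (v:ℕ)+1
          · have haj : (bval (σ, ε) j).natAbs < (v:ℕ)+1 :=
              small_abs hmax hp ε (by omega) hjV hjP
            have h3 : (p:ℕ)+1 < j ∧ (j = (p:ℕ)+1 ∨ ((p:ℕ)+1 = (p:ℕ)+1 ∧ j ≤ (v:ℕ)+1)) :=
              ⟨hij, Or.inr ⟨rfl, hjV⟩⟩
            rw [if_pos h3]
            by_cases hcc : bval (σ, ε) j < bval (σ, ε) ((p:ℕ)+1)
            · have h1 : (p:ℕ)+1 < j ∧ bval (σ, ε) j < bval (σ, ε) ((p:ℕ)+1) := ⟨hij, hcc⟩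
              have h2 : ¬((p:ℕ)+1 < j ∧ bval (σ, ε) j < -bval (σ, ε) ((p:ℕ)+1)) := by
                rintro ⟨-, h⟩; omega
              rw [if_pos h1, if_neg h2]
              simp
            · have h1 : ¬((p:ℕ)+1 < j ∧ bval (σ, ε) j < bval (σ, ε) ((p:ℕ)+1)) := by
                rintro ⟨-, h⟩; omega
              have h2 : (p:ℕ)+1 < j ∧ bval (σ, ε) j < -bval (σ, ε) ((p:ℕ)+1) := ⟨hij, by omega⟩
              rw [if_neg h1, if_pos h2]
              simp
          · have haj : (bval (σ, ε) j).natAbs = j := big_abs hmax ε (by omega) hj2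
            have h3 : ¬((p:ℕ)+1 < j ∧ (j = (p:ℕ)+1 ∨ ((p:ℕ)+1 = (p:ℕ)+1 ∧ j ≤ (v:ℕ)+1))) := by
              rintro ⟨-, h | ⟨-, h⟩⟩ <;> omega
            rw [if_neg h3]
            by_cases hcc : bval (σ, ε) j < bval (σ, ε) ((p:ℕ)+1)
            · have h1 : (p:ℕ)+1 < j ∧ bval (σ, ε) j < bval (σ, ε) ((p:ℕ)+1) := ⟨hij, hcc⟩
              have h2 : (p:ℕ)+1 < j ∧ bval (σ, ε) j < -bval (σ, ε) ((p:ℕ)+1) := ⟨hij, by omega⟩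
              rw [if_pos h1, if_pos h2]
              decide
            · have h1 : ¬((p:ℕ)+1 < j ∧ bval (σ, ε) j < bval (σ, ε) ((p:ℕ)+1)) := by
                rintro ⟨-, h⟩; omega
              have h2 : ¬((p:ℕ)+1 < j ∧ bval (σ, ε) j < -bval (σ, ε) ((p:ℕ)+1)) := by
                rintro ⟨-, h⟩; omega
              rw [if_neg h1, if_neg h2]
              simp
        · rw [bval_flip_ne ε _ hjP, bval_flip_ne ε _ hiP]
          have h3 : ¬(i < j ∧ (j = (p:ℕ)+1 ∨ (i = (p:ℕ)+1 ∧ j ≤ (v:ℕ)+1))) := by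
            rintro ⟨-, h | ⟨h, -⟩⟩ <;> omega
          rw [if_neg h3]
          exact hzz _
    rw [Finset.sum_congr rfl hpt]
    have hcast : ∀ (c : Prop) [Decidable c],
        (if c then (1 : ZMod 2) else 0) = (((if c then 1 else 0 : ℕ)) : ZMod 2) := by
      intro c _; split <;> simp
    calc ∑ q ∈ (Icc 1 n) ×ˢ (Icc 1 n),
          (if q.1 < q.2 ∧ (q.2 = (p:ℕ)+1 ∨ (q.1 = (p:ℕ)+1 ∧ q.2 ≤ (v:ℕ)+1)) then (1 : ZMod 2) else 0)
        = ((∑ q ∈ (Icc 1 n) ×ˢ (Icc 1 n),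
            (if q.1 < q.2 ∧ (q.2 = (p:ℕ)+1 ∨ (q.1 = (p:ℕ)+1 ∧ q.2 ≤ (v:ℕ)+1)) then 1 else 0 : ℕ) : ℕ) : ZMod 2) := by
          rw [Nat.cast_sum]
          exact Finset.sum_congr rfl fun q _ => hcast _
      _ = ((((v:ℕ)+1 - ((p:ℕ)+1)) + (((p:ℕ)+1) - 1) : ℕ) : ZMod 2) := by
          rw [Finset.sum_product]
          rw [count_lemma n ((p:ℕ)+1) ((v:ℕ)+1) (by omega) (by omega) (by omega)]
  calc _ = (((((Icc 1 n) ×ˢ (Icc 1 n)).filter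
        (fun q => q.1 < q.2 ∧ bval (σ, ε) q.2 < bval (σ, ε) q.1)).card : ZMod 2)
      + (((((Icc 1 n) ×ˢ (Icc 1 n)).filter
        (fun q => q.1 < q.2 ∧ bval (σ, ε') q.2 < bval (σ, ε') q.1)).card : ZMod 2)))
      + (((∑ i ∈ (Icc 1 n).filter (fun i => bval (σ, ε) i < 0), (bval (σ, ε) i).natAbs : ℕ) : ZMod 2)
      + ((∑ i ∈ (Icc 1 n).filter (fun i => bval (σ, ε') i < 0), (bval (σ, ε') i).natAbs : ℕ) : ZMod 2)) := by
        ring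
    _ = 1 := by
        rw [hAA, hBB]
        rw [show ((v:ℕ)+1 - ((p:ℕ)+1)) + (((p:ℕ)+1) - 1) = (v:ℕ) - (p:ℕ) + (p:ℕ) from by omega]
        rw [show ((v:ℕ) - (p:ℕ) + (p:ℕ)) = (v:ℕ) from by omega]
        rw [show ((v:ℕ) + 1 : ℕ) = ((v:ℕ) + 1) from rfl]
        push_cast
        ring_nf
        rw [show ((2 : ZMod 2)) = 0 from by decide]
        ring
end invflip

lemma neg_one_pow_add_eq_zero {a b : ℕ} (h : Odd (a + b)) : (-1 : ℚ) ^ a + (-1) ^ b = 0 := by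
  rcases Nat.even_or_odd a with ha | ha
  · have hb : Odd b := by
      rw [Nat.odd_iff] at h ⊢; rw [Nat.even_iff] at ha; omega
    rw [ha.neg_one_pow, hb.neg_one_pow]; ring
  · have hb : Even b := by
      rw [Nat.odd_iff] at h ha; rw [Nat.even_iff]; omega
    rw [ha.neg_one_pow, hb.neg_one_pow]; ring

set_option maxHeartbeats 1000000 in
lemma cancel {n : ℕ} (σ : Equiv.Perm (Fin n)) (hσ : σ ≠ 1) :
    ∑ ε : Fin n → Bool, (MvPolynomial.C ((-1 : ℚ) ^ invB ((σ, ε) : BPerm n)) *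
        (MvPolynomial.X 1 : MvPolynomial (Fin 2) ℚ) ^ desB ((σ, ε) : BPerm n) *
        (MvPolynomial.X 0) ^ ascB ((σ, ε) : BPerm n)) = 0 := by
  have hne : (Finset.univ.filter (fun u => σ u ≠ u)).Nonempty := by
    by_contra h
    apply hσ
    rw [Finset.not_nonempty_iff_eq_empty, Finset.filter_eq_empty_iff] at h
    exact Equiv.ext fun u => by have := h (Finset.mem_univ u); simpa using this
  obtain ⟨v, hvne, hmax⟩ : ∃ v, σ v ≠ v ∧ ∀ u, σ u ≠ u → u ≤ v := by
    refine ⟨(Finset.univ.filter (fun u => σ u ≠ u)).max' hne, ?_, ?_⟩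
    · have hvmem := Finset.max'_mem _ hne
      rw [Finset.mem_filter] at hvmem
      exact hvmem.2
    · exact fun u hu => Finset.le_max' (Finset.univ.filter (fun x => σ x ≠ x)) u (Finset.mem_filter.mpr ⟨Finset.mem_univ u, hu⟩)
  set p := σ⁻¹ v with hpdef
  have hp : σ p = v := σ.apply_symm_apply v
  have hpv : p < v := by
    rcases lt_trichotomy p v with h | h | h
    · exact h
    · exfalso; rw [h] at hp; exact hvne hp
    · exfalso
      have hne2 : σ p ≠ p := by rw [hp]; exact Fin.ne_of_lt h
      exact absurd (hmax p hne2) (not_le.mpr h)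
  apply Finset.sum_involution (fun ε _ => Function.update ε p (!(ε p)))
  · intro ε _
    have hd := desB_flip hmax hp hpv ε
    have ha := ascB_flip hmax hp hpv ε
    have hodd := invB_flip hmax hp hpv ε
    rw [hd, ha]
    have hz : ((-1:ℚ) ^ invB ((σ, ε) : BPerm n))
        + ((-1:ℚ) ^ invB ((σ, Function.update ε p (!(ε p))) : BPerm n)) = 0 :=
      neg_one_pow_add_eq_zero hodd
    calc MvPolynomial.C ((-1:ℚ) ^ invB ((σ, ε) : BPerm n)) *
          (MvPolynomial.X 1 : MvPolynomial (Fin 2) ℚ) ^ desB ((σ, ε) : BPerm n) *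
          MvPolynomial.X 0 ^ ascB ((σ, ε) : BPerm n)
        + MvPolynomial.C ((-1:ℚ) ^ invB ((σ, Function.update ε p (!(ε p))) : BPerm n)) *
          (MvPolynomial.X 1 : MvPolynomial (Fin 2) ℚ) ^ desB ((σ, ε) : BPerm n) *
          MvPolynomial.X 0 ^ ascB ((σ, ε) : BPerm n)
        = (MvPolynomial.C ((-1:ℚ) ^ invB ((σ, ε) : BPerm n))
            + MvPolynomial.C ((-1:ℚ) ^ invB ((σ, Function.update ε p (!(ε p))) : BPerm n))) *
          ((MvPolynomial.X 1 : MvPolynomial (Fin 2) ℚ) ^ desB ((σ, ε) : BPerm n) *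
            MvPolynomial.X 0 ^ ascB ((σ, ε) : BPerm n)) := by ring
      _ = 0 := by rw [← map_add, hz, map_zero, zero_mul]
  · intro ε _ _
    intro h
    have := congrFun h p
    rw [Function.update_self] at this
    simp at this
  · intro ε _
    funext j
    by_cases hj : j = p
    · subst hj; simp
    · simp [Function.update_of_ne hj]
  · intro ε _; exact Finset.mem_univ _

lemma bval_sign {n : ℕ} (w : BPerm n) {i : ℕ} (h1 : 1 ≤ i) (h2 : i ≤ n) :
    bval w i < 0 ↔ w.2 ⟨i - 1, by omega⟩ = true := by
  rw [bval, dif_pos ⟨h1, h2⟩]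
  rcases hb : w.2 ⟨i - 1, by omega⟩ <;> simp [hb] <;> omega

lemma sum_Icc_one {M : Type*} [AddCommMonoid M] (n : ℕ) (f : ℕ → M) :
    ∑ j ∈ Finset.Icc 1 n, f j = ∑ j ∈ Finset.range n, f (j + 1) := by
  rw [← Finset.Ico_add_one_right_eq_Icc, Finset.sum_Ico_eq_sum_range]
  exact Finset.sum_congr rfl fun i _ => by rw [Nat.add_comm]

lemma sum_range_dite {M : Type*} [AddCommMonoid M] (n : ℕ) (g : Fin n → M) :
    ∑ i ∈ Finset.range n, (if h : i < n then g ⟨i, h⟩ else 0) = ∑ j : Fin n, g j := by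
  rw [← Fin.sum_univ_eq_sum_range (fun i => if h : i < n then g ⟨i, h⟩ else 0) n]
  exact Finset.sum_congr rfl fun j _ => by simp [dif_pos j.isLt]

lemma zmod_parity {a b : ℕ} (h : ((a : ℕ) : ZMod 2) = ((b : ℕ) : ZMod 2)) : a % 2 = b % 2 := by
  have := (ZMod.natCast_eq_natCast_iff _ _ _).mp h
  simpa [Nat.ModEq] using this

lemma neg_one_pow_congr' {a b : ℕ} (h : a % 2 = b % 2) : (-1 : ℚ) ^ a = (-1) ^ b := by
  rcases Nat.even_or_odd a with ha | ha
  · have hb : Even b := by rw [Nat.even_iff] at ha ⊢; omega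
    rw [ha.neg_one_pow, hb.neg_one_pow]
  · have hb : Odd b := by rw [Nat.odd_iff] at ha ⊢; omega
    rw [ha.neg_one_pow, hb.neg_one_pow]

lemma bval_one {n : ℕ} (ε : Fin n → Bool) {i : ℕ} (h1 : 1 ≤ i) (h2 : i ≤ n) :
    bval (((1 : Equiv.Perm (Fin n)), ε) : BPerm n) i
      = if ε ⟨i - 1, by omega⟩ then -(i : ℤ) else (i : ℤ) := by
  rw [bval, dif_pos ⟨h1, h2⟩]
  rcases hb : ε ⟨i - 1, by omega⟩ <;>
    simp [hb, Equiv.Perm.one_apply] <;> omega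

lemma bval_one_natAbs {n : ℕ} (ε : Fin n → Bool) {i : ℕ} (h1 : 1 ≤ i) (h2 : i ≤ n) :
    (bval (((1 : Equiv.Perm (Fin n)), ε) : BPerm n) i).natAbs = i := by
  rw [bval_natAbs _ h1 h2]
  simp [Equiv.Perm.one_apply]
  omega

lemma des_one {n : ℕ} (ε : Fin n → Bool) :
    desB (((1 : Equiv.Perm (Fin n)), ε) : BPerm n)
      = (Finset.univ.filter (fun j => ε j = true)).card := by
  rw [desB, Finset.card_filter]
  have hpt : ∀ i ∈ Finset.range n,
      (if bval (((1 : Equiv.Perm (Fin n)), ε) : BPerm n) (i + 1)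
          < bval (((1 : Equiv.Perm (Fin n)), ε) : BPerm n) i then 1 else 0 : ℕ)
        = if h : i < n then (if ε ⟨i, h⟩ then 1 else 0) else 0 := by
    intro i hi
    rw [Finset.mem_range] at hi
    rw [dif_pos hi]
    have e2 : (bval (((1 : Equiv.Perm (Fin n)), ε) : BPerm n) i).natAbs ≤ i := by
      rcases Nat.eq_zero_or_pos i with h0 | h0
      · rw [h0, bval_out _ (by omega)]; simp
      · rw [bval_one_natAbs ε h0 (by omega)]
    have e1 : bval (((1 : Equiv.Perm (Fin n)), ε) : BPerm n) (i + 1)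
        = if ε ⟨i, hi⟩ then -((i + 1 : ℕ) : ℤ) else ((i + 1 : ℕ) : ℤ) :=
      bval_one ε (by omega) (by omega)
    apply if_congr _ rfl rfl
    rw [e1]
    rcases hb : ε ⟨i, hi⟩ <;> simp [hb] <;> omega
  rw [Finset.sum_congr rfl hpt, Finset.card_filter]
  exact sum_range_dite n (fun j => if ε j = true then (1 : ℕ) else 0)

lemma asc_one {n : ℕ} (ε : Fin n → Bool) :
    ascB (((1 : Equiv.Perm (Fin n)), ε) : BPerm n)
      = n - (Finset.univ.filter (fun j => ε j = true)).card := by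
  have hcard : (Finset.univ.filter (fun j => ε j = true)).card
      + (Finset.univ.filter (fun j : Fin n => ε j = false)).card = n := by
    have h1 := Finset.card_filter_add_card_filter_not
      (s := (Finset.univ : Finset (Fin n))) (p := fun j => ε j = true)
    have h2 : Finset.univ.filter (fun j : Fin n => ¬ (ε j = true))
        = Finset.univ.filter (fun j => ε j = false) := by
      apply Finset.filter_congr
      intro j _
      simp [Bool.not_eq_true]
    rw [h2] at h1
    rw [Finset.card_univ, Fintype.card_fin] at h1
    exact h1
  have hmain : ascB (((1 : Equiv.Perm (Fin n)), ε) : BPerm n)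
      = (Finset.univ.filter (fun j : Fin n => ε j = false)).card := by
    rw [ascB, Finset.card_filter]
    have hpt : ∀ i ∈ Finset.range n,
        (if bval (((1 : Equiv.Perm (Fin n)), ε) : BPerm n) i
            < bval (((1 : Equiv.Perm (Fin n)), ε) : BPerm n) (i + 1) then 1 else 0 : ℕ)
          = if h : i < n then (if ε ⟨i, h⟩ = false then 1 else 0) else 0 := by
      intro i hi
      rw [Finset.mem_range] at hi
      rw [dif_pos hi]
      have e2 : (bval (((1 : Equiv.Perm (Fin n)), ε) : BPerm n) i).natAbs ≤ i := by
        rcases Nat.eq_zero_or_pos i with h0 | h0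
        · rw [h0, bval_out _ (by omega)]; simp
        · rw [bval_one_natAbs ε h0 (by omega)]
      have e1 : bval (((1 : Equiv.Perm (Fin n)), ε) : BPerm n) (i + 1)
          = if ε ⟨i, hi⟩ then -((i + 1 : ℕ) : ℤ) else ((i + 1 : ℕ) : ℤ) :=
        bval_one ε (by omega) (by omega)
      apply if_congr _ rfl rfl
      rw [e1]
      rcases hb : ε ⟨i, hi⟩ <;> simp [hb] <;> omega
    rw [Finset.sum_congr rfl hpt, Finset.card_filter]
    exact sum_range_dite n (fun j => if ε j = false then (1 : ℕ) else 0)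
  rw [hmain]
  omega

lemma sgn_one {n : ℕ} (ε : Fin n → Bool) :
    (-1 : ℚ) ^ invB (((1 : Equiv.Perm (Fin n)), ε) : BPerm n)
      = (-1) ^ (Finset.univ.filter (fun j => ε j = true)).card := by
  apply neg_one_pow_congr'
  apply zmod_parity
  rw [invB, Nat.cast_add]
  have hA : ((((Finset.Icc 1 n) ×ˢ (Finset.Icc 1 n)).filter
      (fun q => q.1 < q.2 ∧ bval (((1 : Equiv.Perm (Fin n)), ε) : BPerm n) q.2
        < bval (((1 : Equiv.Perm (Fin n)), ε) : BPerm n) q.1)).card : ℕ)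
      = ∑ j ∈ Finset.Icc 1 n,
          (if bval (((1 : Equiv.Perm (Fin n)), ε) : BPerm n) j < 0 then j - 1 else 0 : ℕ) := by
    rw [Finset.card_filter, Finset.sum_product, Finset.sum_comm]
    apply Finset.sum_congr rfl
    intro j hj
    rw [Finset.mem_Icc] at hj
    have hj_abs : (bval (((1 : Equiv.Perm (Fin n)), ε) : BPerm n) j).natAbs = j :=
      bval_one_natAbs ε hj.1 hj.2
    by_cases hc : bval (((1 : Equiv.Perm (Fin n)), ε) : BPerm n) j < 0
    · rw [if_pos hc]
      have hpt : ∀ i ∈ Finset.Icc 1 n,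
          (if (i < j ∧ bval (((1 : Equiv.Perm (Fin n)), ε) : BPerm n) j
              < bval (((1 : Equiv.Perm (Fin n)), ε) : BPerm n) i) then 1 else 0 : ℕ)
            = if i ∈ Finset.Icc 1 (j - 1) then 1 else 0 := by
        intro i hi
        rw [Finset.mem_Icc] at hi
        have hi_abs : (bval (((1 : Equiv.Perm (Fin n)), ε) : BPerm n) i).natAbs = i :=
          bval_one_natAbs ε hi.1 hi.2
        apply if_congr _ rfl rfl
        rw [Finset.mem_Icc]
        constructor
        · rintro ⟨h, -⟩; omega
        · rintro ⟨h1', h2'⟩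
          constructor
          · omega
          · omega
      rw [Finset.sum_congr rfl hpt, Finset.sum_ite_mem]
      rw [show Finset.Icc 1 n ∩ Finset.Icc 1 (j - 1) = Finset.Icc 1 (j - 1) from by
        ext k; simp only [Finset.mem_inter, Finset.mem_Icc]; omega]
      rw [Finset.sum_const, Nat.card_Icc, smul_eq_mul, mul_one]
      omega
    · rw [if_neg hc]
      apply Finset.sum_eq_zero
      intro i hi
      rw [Finset.mem_Icc] at hi
      have hi_abs : (bval (((1 : Equiv.Perm (Fin n)), ε) : BPerm n) i).natAbs = i :=
        bval_one_natAbs ε hi.1 hi.2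
      dsimp only
      rw [if_neg]
      rintro ⟨h1', h2'⟩
      omega
  have hB : (∑ i ∈ (Finset.Icc 1 n).filter
      (fun i => bval (((1 : Equiv.Perm (Fin n)), ε) : BPerm n) i < 0),
        (bval (((1 : Equiv.Perm (Fin n)), ε) : BPerm n) i).natAbs)
      = ∑ j ∈ Finset.Icc 1 n,
          (if bval (((1 : Equiv.Perm (Fin n)), ε) : BPerm n) j < 0 then j else 0 : ℕ) := by
    rw [Finset.sum_filter]
    apply Finset.sum_congr rfl
    intro j hj
    rw [Finset.mem_Icc] at hj
    by_cases hc : bval (((1 : Equiv.Perm (Fin n)), ε) : BPerm n) j < 0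
    · rw [if_pos hc, if_pos hc, bval_one_natAbs ε hj.1 hj.2]
    · rw [if_neg hc, if_neg hc]
  rw [hA, hB, Nat.cast_sum, Nat.cast_sum, ← Finset.sum_add_distrib]
  have hpt2 : ∀ j ∈ Finset.Icc 1 n,
      (((if bval (((1 : Equiv.Perm (Fin n)), ε) : BPerm n) j < 0 then j - 1 else 0 : ℕ)) : ZMod 2)
        + (((if bval (((1 : Equiv.Perm (Fin n)), ε) : BPerm n) j < 0 then j else 0 : ℕ)) : ZMod 2)
      = if bval (((1 : Equiv.Perm (Fin n)), ε) : BPerm n) j < 0 then (1 : ZMod 2) else 0 := by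
    intro j hj
    rw [Finset.mem_Icc] at hj
    by_cases hc : bval (((1 : Equiv.Perm (Fin n)), ε) : BPerm n) j < 0
    · rw [if_pos hc, if_pos hc, if_pos hc, ← Nat.cast_add,
        show j - 1 + j = 2 * (j - 1) + 1 from by omega]
      push_cast
      rw [show ((2 : ZMod 2)) = 0 from by decide]
      ring
    · rw [if_neg hc, if_neg hc, if_neg hc]
      simp
  rw [Finset.sum_congr rfl hpt2]
  calc ∑ j ∈ Finset.Icc 1 n,
        (if bval (((1 : Equiv.Perm (Fin n)), ε) : BPerm n) j < 0 then (1 : ZMod 2) else 0)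
      = ∑ j ∈ Finset.range n, (if h : j < n then (if ε ⟨j, h⟩ then (1 : ZMod 2) else 0) else 0) := by
        rw [sum_Icc_one]
        apply Finset.sum_congr rfl
        intro j hj
        rw [Finset.mem_range] at hj
        rw [dif_pos hj]
        apply if_congr _ rfl rfl
        exact bval_sign (((1 : Equiv.Perm (Fin n)), ε) : BPerm n) (by omega) (by omega)
    _ = ∑ j : Fin n, (if ε j then (1 : ZMod 2) else 0) :=
        sum_range_dite n (fun j => if ε j then (1 : ZMod 2) else 0)
    _ = (((Finset.univ.filter (fun j => ε j = true)).card : ℕ) : ZMod 2) := by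
        rw [Finset.card_filter, Nat.cast_sum]
        exact (Finset.sum_congr rfl fun j _ => by split <;> simp).symm

lemma one_part {n : ℕ} :
    ∑ ε : Fin n → Bool, (MvPolynomial.C ((-1 : ℚ) ^ invB (((1 : Equiv.Perm (Fin n)), ε) : BPerm n)) *
        (MvPolynomial.X 1 : MvPolynomial (Fin 2) ℚ) ^ desB (((1 : Equiv.Perm (Fin n)), ε) : BPerm n) *
        (MvPolynomial.X 0) ^ ascB (((1 : Equiv.Perm (Fin n)), ε) : BPerm n))
      = (MvPolynomial.X 0 - MvPolynomial.X 1 : MvPolynomial (Fin 2) ℚ) ^ n := by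
  have hterm : ∀ (k m : ℕ), MvPolynomial.C ((-1 : ℚ) ^ k) * (MvPolynomial.X 1 : MvPolynomial (Fin 2) ℚ) ^ k
      * MvPolynomial.X 0 ^ m = MvPolynomial.X 0 ^ m * (- MvPolynomial.X 1) ^ k := by
    intro k m
    rw [show ((- MvPolynomial.X 1 : MvPolynomial (Fin 2) ℚ)) ^ k
        = MvPolynomial.C ((-1 : ℚ) ^ k) * MvPolynomial.X 1 ^ k from by
      rw [neg_pow, map_pow, map_neg, map_one]]
    ring
  have hkle : ∀ ε : Fin n → Bool, (Finset.univ.filter (fun j => ε j = true)).card ≤ n := by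
    intro ε
    calc (Finset.univ.filter (fun j => ε j = true)).card ≤ Finset.univ.card :=
          Finset.card_filter_le _ _
      _ = n := by rw [Finset.card_univ, Fintype.card_fin]
  have hkm : ∀ ε : Fin n → Bool, (Finset.univ.filter (fun j => ε j = false)).card
      = n - (Finset.univ.filter (fun j => ε j = true)).card := by
    intro ε
    have h1 := Finset.card_filter_add_card_filter_not
      (s := (Finset.univ : Finset (Fin n))) (p := fun j => ε j = true)
    have h2 : Finset.univ.filter (fun j : Fin n => ¬ (ε j = true))
        = Finset.univ.filter (fun j => ε j = false) := by
      apply Finset.filter_congr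
      intro j _
      simp [Bool.not_eq_true]
    rw [h2] at h1
    rw [Finset.card_univ, Fintype.card_fin] at h1
    omega
  calc ∑ ε : Fin n → Bool, (MvPolynomial.C ((-1 : ℚ) ^ invB (((1 : Equiv.Perm (Fin n)), ε) : BPerm n)) *
        (MvPolynomial.X 1 : MvPolynomial (Fin 2) ℚ) ^ desB (((1 : Equiv.Perm (Fin n)), ε) : BPerm n) *
        (MvPolynomial.X 0) ^ ascB (((1 : Equiv.Perm (Fin n)), ε) : BPerm n))
      = ∑ ε : Fin n → Bool, (MvPolynomial.X 0 : MvPolynomial (Fin 2) ℚ)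
          ^ (n - (Finset.univ.filter (fun j => ε j = true)).card)
          * (- MvPolynomial.X 1) ^ (Finset.univ.filter (fun j => ε j = true)).card := by
        apply Finset.sum_congr rfl
        intro ε _
        rw [des_one ε, asc_one ε, sgn_one ε, hterm]
    _ = ∑ t ∈ (Finset.univ : Finset (Fin n)).powerset,
          (MvPolynomial.X 0 : MvPolynomial (Fin 2) ℚ) ^ t.card * (- MvPolynomial.X 1) ^ (n - t.card) := by
        apply Finset.sum_nbij' (i := fun ε => Finset.univ.filter (fun j => ε j = false))
          (j := fun t => (fun x => decide (x ∉ t)))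
        · intro ε _
          exact Finset.mem_powerset.mpr (Finset.filter_subset _ _)
        · intro t _
          exact Finset.mem_univ _
        · intro ε _
          funext x
          rcases hb : ε x with hf | ht
          · simp [hb]
          · simp [hb]
        · intro t ht
          ext x
          simp
        · intro ε _
          rw [hkm ε, Nat.sub_sub_self (hkle ε)]
    _ = (MvPolynomial.X 0 - MvPolynomial.X 1 : MvPolynomial (Fin 2) ℚ) ^ n := by
        rw [show ((MvPolynomial.X 0 - MvPolynomial.X 1 : MvPolynomial (Fin 2) ℚ)) ^ n
            = ∏ _j : Fin n, ((MvPolynomial.X 0 : MvPolynomial (Fin 2) ℚ) + (- MvPolynomial.X 1)) from by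
          rw [Finset.prod_const, Finset.card_univ, Fintype.card_fin]; ring]
        rw [Finset.prod_add]
        apply Finset.sum_congr rfl
        intro t ht
        rw [Finset.prod_const, Finset.prod_const,
          Finset.card_sdiff_of_subset (Finset.mem_powerset.mp ht), Finset.card_univ, Fintype.card_fin]


theorem stmt13 (n : ℕ) (hn : 1 ≤ n) :
    (∑ w : BPerm n, MvPolynomial.C ((-1 : ℚ) ^ invB w) *
        (MvPolynomial.X 1 : MvPolynomial (Fin 2) ℚ) ^ desB w *
        (MvPolynomial.X 0) ^ ascB w)
    = (MvPolynomial.X 0 - MvPolynomial.X 1 : MvPolynomial (Fin 2) ℚ) ^ n := by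
  rw [Fintype.sum_prod_type]
  rw [← Finset.add_sum_erase Finset.univ _ (Finset.mem_univ (1 : Equiv.Perm (Fin n)))]
  rw [Finset.sum_eq_zero (fun σ hσ => cancel σ (Finset.ne_of_mem_erase hσ)), add_zero]
  exact one_part
end

section
/- For all n ≥ 2, the excedance polynomial over n-cycles satisfies ∑_{π ∈ S_n, π an n-cycle} t^{exc(π)} = t·A_{n-1}(t), where A_{n-1}(t) is the Eulerian polynomial ∑_{σ ∈ S_{n-1}} t^{des(σ)}. -/
open Finset Polynomial

/-- Number of descents of a permutation in one-line notation. -/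
def desA {n : ℕ} (π : Equiv.Perm (Fin n)) : ℕ :=
  ((Finset.range (n - 1)).filter (fun i => onel π (i + 1) < onel π i)).card

/-- The Eulerian polynomial `A_m(t) = ∑_{σ ∈ S_m} t^{des σ}`. -/
noncomputable def Euler (m : ℕ) : Polynomial ℚ :=
  ∑ σ : Equiv.Perm (Fin m), (Polynomial.X : Polynomial ℚ) ^ desA σ

/-- Auxiliary bijection: `0 ↦ last`, `i+1 ↦ (σ i).rev.castSucc`. -/
def gE {m : ℕ} (σ : Equiv.Perm (Fin (m+1))) : Equiv.Perm (Fin (m+2)) where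
  toFun j := Fin.cases (Fin.last (m+1)) (fun i => ((σ i).rev).castSucc) j
  invFun j := if h : j = Fin.last (m+1) then 0 else (σ.symm ((j.castPred h).rev)).succ
  left_inv j := by
    cases j using Fin.cases with
    | zero => simp
    | succ i =>
        have h : ((σ i).rev.castSucc : Fin (m+2)) ≠ Fin.last (m+1) :=
          Fin.ne_of_lt (Fin.castSucc_lt_last _)
        simp [h]
  right_inv j := by
    rcases eq_or_ne j (Fin.last (m+1)) with rfl | h
    · simp
    · simp [h]

@[simp] lemma gE_zero {m : ℕ} (σ : Equiv.Perm (Fin (m+1))) :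
    gE σ 0 = Fin.last (m+1) := rfl

@[simp] lemma gE_succ {m : ℕ} (σ : Equiv.Perm (Fin (m+1))) (i : Fin (m+1)) :
    gE σ i.succ = ((σ i).rev).castSucc := rfl

/-- The conjugated rotation: an `(m+2)`-cycle built from `σ`. -/
def Phi {m : ℕ} (σ : Equiv.Perm (Fin (m+1))) : Equiv.Perm (Fin (m+2)) :=
  gE σ * finRotate (m+2) * (gE σ)⁻¹

lemma Phi_gE {m : ℕ} (σ : Equiv.Perm (Fin (m+1))) (k : Fin (m+2)) :
    Phi σ (gE σ k) = gE σ (k + 1) := by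
  simp [Phi, Equiv.Perm.mul_apply, finRotate_succ_apply]

lemma Phi_cycleType {m : ℕ} (σ : Equiv.Perm (Fin (m+1))) :
    (Phi σ).cycleType = {m+2} :=
  (Equiv.Perm.cycleType_conj).trans cycleType_finRotate

open Fin.NatCast in
lemma Phi_pow {m : ℕ} (σ : Equiv.Perm (Fin (m+1))) (k : ℕ) :
    ((Phi σ) ^ k) (Fin.last (m+1)) = gE σ (k : Fin (m+2)) := by
  induction k with
  | zero => simp
  | succ k ih =>
      rw [pow_succ', Equiv.Perm.mul_apply, ih,
        show ((k+1 : ℕ) : Fin (m+2)) = ((k : ℕ) : Fin (m+2)) + 1 by push_cast; ring]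
      exact Phi_gE σ _

lemma castSucc_succ_add_one {m : ℕ} (j : Fin m) :
    (j.castSucc.succ : Fin (m+2)) + 1 = (j.succ : Fin (m+1)).succ := by
  have hj := j.isLt
  simp only [Fin.ext_iff, Fin.add_def, Fin.val_succ, Fin.coe_castSucc, Fin.val_one]
  rw [Nat.mod_eq_of_lt (by omega)]

lemma desA_eq {m : ℕ} (σ : Equiv.Perm (Fin (m+1))) :
    desA σ = ∑ j : Fin m, (if σ j.succ < σ j.castSucc then 1 else 0) := by
  unfold desA
  rw [Finset.card_filter]
  rw [show (m + 1 - 1) = m from rfl]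
  rw [← Fin.sum_univ_eq_sum_range (fun i => if onel σ (i + 1) < onel σ i then 1 else 0) m]
  refine Finset.sum_congr rfl (fun j _ => ?_)
  have h1 : (j : ℕ) < m + 1 := by omega
  have h2 : (j : ℕ) + 1 < m + 1 := by omega
  have e1 : onel σ (j : ℕ) = σ j.castSucc := by
    simp only [onel, dif_pos h1]; rfl
  have e2 : onel σ ((j : ℕ) + 1) = σ j.succ := by
    simp only [onel, dif_pos h2]; rfl
  rw [e1, e2]
  simp only [Fin.lt_def]

lemma excA_Phi {m : ℕ} (σ : Equiv.Perm (Fin (m+1))) :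
    excA (Phi σ) = desA σ + 1 := by
  unfold excA
  rw [Finset.card_filter]
  rw [← Equiv.sum_comp (gE σ : Fin (m+2) ≃ Fin (m+2))
    (fun j => if j < Phi σ j then 1 else 0)]
  rw [Fin.sum_univ_succ]
  have h0 : (if gE σ 0 < Phi σ (gE σ 0) then (1:ℕ) else 0) = 0 := by
    rw [if_neg]
    rw [gE_zero]
    exact not_lt.mpr (Fin.le_last _)
  rw [h0, zero_add]
  rw [Fin.sum_univ_castSucc]
  have hlast : (if gE σ (Fin.last m).succ < Phi σ (gE σ (Fin.last m).succ) then (1:ℕ) else 0)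
      = 1 := by
    rw [Phi_gE,
      show ((Fin.last m).succ + 1 : Fin (m+2)) = 0 by rw [Fin.succ_last, Fin.last_add_one],
      gE_zero, gE_succ]
    exact if_pos (Fin.castSucc_lt_last _)
  rw [hlast, desA_eq]
  congr 1
  refine Finset.sum_congr rfl (fun j _ => ?_)
  rw [Phi_gE, castSucc_succ_add_one, gE_succ, gE_succ]
  congr 1
  simp only [Fin.castSucc_lt_castSucc_iff, Fin.rev_lt_rev, eq_iff_iff]
open Fin.NatCast in
lemma Phi_inj {m : ℕ} : Function.Injective (Phi (m := m)) := by
  intro σ τ h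
  have hg : ∀ k : Fin (m+2), gE σ k = gE τ k := by
    intro k
    have := Phi_pow σ k.val
    rw [h, Phi_pow τ k.val, Fin.cast_val_eq_self] at this
    exact this.symm
  ext i
  have := hg i.succ
  rw [gE_succ, gE_succ] at this
  have := Fin.castSucc_injective _ this
  have := Fin.rev_injective this
  exact congrArg Fin.val this

lemma Phi_surj {m : ℕ} (π : Equiv.Perm (Fin (m+2))) (hct : π.cycleType = {m+2}) :
    ∃ σ : Equiv.Perm (Fin (m+1)), Phi σ = π := by
  have hsum := Equiv.Perm.sum_cycleType π
  rw [hct, Multiset.sum_singleton] at hsum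
  have hsupp : π.support = Finset.univ := by
    apply Finset.eq_univ_of_card
    rw [← hsum, Fintype.card_fin]
  have hcyc : π.IsCycle := by
    apply Equiv.Perm.card_cycleType_eq_one.mp
    rw [hct]; rfl
  have hco : π.IsCycleOn (Finset.univ : Finset (Fin (m+2))) := by
    have h1 := hcyc.isCycleOn
    have h2 : {x | π x ≠ x} = ((Finset.univ : Finset (Fin (m+2))) : Set (Fin (m+2))) := by
      ext x
      simp [← Equiv.Perm.mem_support, hsupp]
    rwa [h2] at h1
  have horder : orderOf π = m + 2 := by
    rw [← Equiv.Perm.lcm_cycleType, hct, Multiset.lcm_singleton]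
    simp
  have hpow : π ^ (m + 2) = 1 := by
    have := pow_orderOf_eq_one π; rwa [horder] at this
  set L := Fin.last (m+1) with hL
  set g' : Fin (m+2) → Fin (m+2) := fun k => (π ^ (k : ℕ)) L with hg'
  have hginj : Function.Injective g' := by
    intro a b hab
    have := (hco.pow_apply_eq_pow_apply (Finset.mem_univ L)).mp hab
    rw [Finset.card_univ, Fintype.card_fin] at this
    have ha := a.isLt
    have hb := b.isLt
    have : (a : ℕ) % (m+2) = (b : ℕ) % (m+2) := this
    rw [Nat.mod_eq_of_lt ha, Nat.mod_eq_of_lt hb] at this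
    exact Fin.ext this
  have hg'0 : g' 0 = L := by simp [hg']
  have hLne : ∀ i : Fin (m+1), g' i.succ ≠ Fin.last (m+1) := by
    intro i h
    have : g' i.succ = g' 0 := by rw [h, hg'0]
    exact Fin.succ_ne_zero i (hginj this)
  set s : Fin (m+1) → Fin (m+1) := fun i => ((g' i.succ).castPred (hLne i)).rev with hs
  have hsinj : Function.Injective s := by
    intro a b hab
    have h1 := Fin.rev_injective hab
    have h2 : g' a.succ = g' b.succ := by
      rw [← Fin.castSucc_castPred (g' a.succ) (hLne a),
          ← Fin.castSucc_castPred (g' b.succ) (hLne b), h1]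
    exact Fin.succ_injective _ (hginj h2)
  let σ : Equiv.Perm (Fin (m+1)) :=
    Equiv.ofBijective s ((Finite.injective_iff_bijective).mp hsinj)
  have hσ : ∀ i, σ i = s i := fun i => rfl
  have hgE : ∀ k, gE σ k = g' k := by
    intro k
    cases k using Fin.cases with
    | zero => rw [gE_zero, hg'0]
    | succ i =>
        rw [gE_succ, hσ, hs]
        simp only [Fin.rev_rev, Fin.castSucc_castPred]
  have hg'succ : ∀ k : Fin (m+2), g' (k + 1) = π (g' k) := by
    intro k
    rcases eq_or_ne k (Fin.last (m+1)) with rfl | hk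
    · rw [Fin.last_add_one, hg'0]
      show L = π ((π ^ ((Fin.last (m+1) : Fin (m+2)) : ℕ)) L)
      rw [Fin.val_last, ← Equiv.Perm.mul_apply, ← pow_succ']
      rw [hpow]
      rfl
    · have hv : ((k + 1 : Fin (m+2)) : ℕ) = (k : ℕ) + 1 :=
        Fin.val_add_one_of_lt (Fin.lt_last_iff_ne_last.mpr hk)
      show (π ^ ((k + 1 : Fin (m+2)) : ℕ)) L = π ((π ^ (k : ℕ)) L)
      rw [hv, pow_succ', Equiv.Perm.mul_apply]
  refine ⟨σ, ?_⟩
  ext x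
  obtain ⟨k, rfl⟩ := (Finite.injective_iff_bijective.mp hginj).surjective x
  rw [show (Phi σ) (g' k) = (Phi σ) (gE σ k) by rw [hgE], Phi_gE, hgE, hg'succ]

theorem stmt17 (n : ℕ) (hn : 2 ≤ n) :
    (∑ π ∈ Finset.univ.filter
        (fun π : Equiv.Perm (Fin n) => π.cycleType = {n}),
      (Polynomial.X : Polynomial ℚ) ^ excA π)
    = Polynomial.X * Euler (n - 1) := by
  obtain ⟨m, rfl⟩ : ∃ m, n = m + 2 := ⟨n - 2, by omega⟩
  rw [show (m + 2 - 1) = m + 1 from rfl]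
  rw [Euler, Finset.mul_sum]
  refine (Finset.sum_bij (fun (σ : Equiv.Perm (Fin (m+1))) _ => Phi σ) ?_ ?_ ?_ ?_).symm
  · intro σ _
    simp [Phi_cycleType]
  · intro a _ b _ h
    exact Phi_inj h
  · intro π hπ
    rw [Finset.mem_filter] at hπ
    obtain ⟨σ, rfl⟩ := Phi_surj π hπ.2
    exact ⟨σ, Finset.mem_univ σ, rfl⟩
  · intro σ _
    rw [excA_Phi, pow_succ, mul_comm]
end
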